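/- arXiv:1904.00206 — 6 statements merged into one kernel-verified Lean document; each statement's English description precedes it below -/
import Mathlib

section
/- Let Q be a quadratic module on ℝ[X₁,…,Xₙ]. Then Q is Archimedean if and only if there exists λ > 0 such that λ − (X₁² + ⋯ + Xₙ²) ∈ Q. -/
open MvPolynomial Matrix Finset

abbrev PolyMat (n t : ℕ) := Matrix (Fin t) (Fin t) (MvPolynomial (Fin n) ℝ)

noncomputable def evalMat {n t : ℕ} (x : Fin n → ℝ) (A : PolyMat n t) :
    Matrix (Fin t) (Fin t) ℝ :=
  A.map (MvPolynomial.eval x)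

def IsMatQuadraticModule {n t : ℕ} (Q : Set (PolyMat n t)) : Prop :=
  (1 : PolyMat n t) ∈ Q ∧ (∀ F G, F ∈ Q → G ∈ Q → F + G ∈ Q) ∧
    (∀ (A F : PolyMat n t), F ∈ Q → Aᵀ * F * A ∈ Q)

def MatArchimedean {n t : ℕ} (Q : Set (PolyMat n t)) : Prop :=
  ∀ F : PolyMat n t, F.IsSymm → ∃ l : ℝ, 0 < l ∧
    (l • (1 : PolyMat n t) + F ∈ Q ∧ l • (1 : PolyMat n t) - F ∈ Q)

def KMat {n t : ℕ} (Q : Set (PolyMat n t)) : Set (Fin n → ℝ) :=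
  {x | ∀ G ∈ Q, (evalMat x G).PosSemidef}

def KSet {n : ℕ} (G : Set (MvPolynomial (Fin n) ℝ)) : Set (Fin n → ℝ) :=
  {x | ∀ g ∈ G, 0 ≤ MvPolynomial.eval x g}

def IsQuadraticModule {n : ℕ} (M : Set (MvPolynomial (Fin n) ℝ)) : Prop :=
  (1 : MvPolynomial (Fin n) ℝ) ∈ M ∧ (∀ f g, f ∈ M → g ∈ M → f + g ∈ M) ∧
    ∀ (a f : MvPolynomial (Fin n) ℝ), f ∈ M → a ^ 2 * f ∈ M

def IsSemiringCone {n : ℕ} (M : Set (MvPolynomial (Fin n) ℝ)) : Prop :=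
  (∀ f g, f ∈ M → g ∈ M → f + g ∈ M) ∧ (∀ f g, f ∈ M → g ∈ M → f * g ∈ M) ∧
    ∀ r : ℝ, 0 ≤ r → MvPolynomial.C r ∈ M

def IsScalarArchimedean {n : ℕ} (M : Set (MvPolynomial (Fin n) ℝ)) : Prop :=
  ∀ f : MvPolynomial (Fin n) ℝ, ∃ l : ℝ, 0 < l ∧
    (MvPolynomial.C l + f ∈ M ∧ MvPolynomial.C l - f ∈ M)

def QM {n : ℕ} (G : Set (MvPolynomial (Fin n) ℝ)) : Set (MvPolynomial (Fin n) ℝ) :=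
  ⋂₀ {M | IsQuadraticModule M ∧ G ⊆ M}

def SR {n : ℕ} (G : Set (MvPolynomial (Fin n) ℝ)) : Set (MvPolynomial (Fin n) ℝ) :=
  ⋂₀ {M | IsSemiringCone M ∧ G ⊆ M}

def MatQM {n t : ℕ} (𝒢 : Set (PolyMat n t)) : Set (PolyMat n t) :=
  ⋂₀ {Q | IsMatQuadraticModule Q ∧ 𝒢 ⊆ Q}

def liftT {n : ℕ} (M : Set (MvPolynomial (Fin n) ℝ)) (t : ℕ) : Set (PolyMat n t) :=
  {F | ∃ (k : ℕ) (m : Fin k → MvPolynomial (Fin n) ℝ) (A : Fin k → PolyMat n t),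
    (∀ i, m i ∈ M) ∧ F = ∑ i, m i • ((A i)ᵀ * A i)}

def P0 {n : ℕ} : Set (MvPolynomial (Fin n) ℝ) := {p | ∀ s, 0 ≤ p.coeff s}

/-! The polynomials `f` with `λ ± f ∈ Q` for some `λ` form an `ℝ`-subalgebra: closure under
products reduces, by polarization, to closure under squares, which follows from
`(λ + f)²(λ - f) + (λ - f)²(λ + f) = 2λ(λ² - f²)`. If `λ - ∑ Xᵢ² ∈ Q` then `λ - Xᵢ² ∈ Q`, and
`(λ + 1)/2 ± Xᵢ = ((Xᵢ ± 1)² + (λ - Xᵢ²))/2` puts every variable in that subalgebra, which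
is therefore everything. -/

namespace IsQuadraticModule

variable {n : ℕ} {Q : Set (MvPolynomial (Fin n) ℝ)}

theorem add_mem (hQ : IsQuadraticModule Q) {f g : MvPolynomial (Fin n) ℝ} (hf : f ∈ Q)
    (hg : g ∈ Q) : f + g ∈ Q :=
  hQ.2.1 f g hf hg

theorem sq_mul_mem (hQ : IsQuadraticModule Q) (a : MvPolynomial (Fin n) ℝ)
    {f : MvPolynomial (Fin n) ℝ} (hf : f ∈ Q) : a ^ 2 * f ∈ Q :=
  hQ.2.2 a f hf

theorem sq_mem (hQ : IsQuadraticModule Q) (a : MvPolynomial (Fin n) ℝ) : a ^ 2 ∈ Q := by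
  simpa using hQ.sq_mul_mem a hQ.1

theorem C_mul_mem (hQ : IsQuadraticModule Q) {c : ℝ} (hc : 0 ≤ c)
    {f : MvPolynomial (Fin n) ℝ} (hf : f ∈ Q) : C c * f ∈ Q := by
  simpa [← map_pow, Real.sq_sqrt hc] using hQ.sq_mul_mem (C √c) hf

theorem C_mem (hQ : IsQuadraticModule Q) {c : ℝ} (hc : 0 ≤ c) :
    (C c : MvPolynomial (Fin n) ℝ) ∈ Q := by
  simpa using hQ.C_mul_mem hc hQ.1

theorem sum_sq_mem (hQ : IsQuadraticModule Q) {ι : Type*} (s : Finset ι)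
    (f : ι → MvPolynomial (Fin n) ℝ) : ∑ i ∈ s, f i ^ 2 ∈ Q := by
  classical
  induction s using Finset.induction_on with
  | empty => simpa using hQ.sq_mem 0
  | insert i s hi ih => simpa [Finset.sum_insert hi] using hQ.add_mem (hQ.sq_mem (f i)) ih

theorem sub_sq_mem_of_sub_sum_sq_mem (hQ : IsQuadraticModule Q) {ι : Type*} [DecidableEq ι]
    {s : Finset ι} {f : ι → MvPolynomial (Fin n) ℝ} {g : MvPolynomial (Fin n) ℝ}
    (hg : g - ∑ j ∈ s, f j ^ 2 ∈ Q) {i : ι} (hi : i ∈ s) : g - f i ^ 2 ∈ Q := by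
  have hsplit := Finset.add_sum_erase s (fun j ↦ f j ^ 2) hi
  convert hQ.add_mem hg (hQ.sum_sq_mem (s.erase i) f) using 1
  rw [← hsplit]
  ring

def bounded (Q : Set (MvPolynomial (Fin n) ℝ)) : Set (MvPolynomial (Fin n) ℝ) :=
  {f | ∃ l : ℝ, 0 < l ∧ (C l + f ∈ Q ∧ C l - f ∈ Q)}

theorem mem_bounded_of (hQ : IsQuadraticModule Q) {l : ℝ} {f : MvPolynomial (Fin n) ℝ}
    (hadd : C l + f ∈ Q) (hsub : C l - f ∈ Q) : f ∈ bounded Q := by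
  have hC : (C (|l| + 1 - l) : MvPolynomial (Fin n) ℝ) ∈ Q :=
    hQ.C_mem (by linarith [le_abs_self l])
  refine ⟨|l| + 1, by positivity, ?_, ?_⟩
  · convert hQ.add_mem hC hadd using 1
    simp only [map_sub, map_add]
    ring
  · convert hQ.add_mem hC hsub using 1
    simp only [map_sub, map_add]
    ring

theorem C_mem_bounded (hQ : IsQuadraticModule Q) (c : ℝ) :
    (C c : MvPolynomial (Fin n) ℝ) ∈ bounded Q := by
  refine hQ.mem_bounded_of (l := |c|) ?_ ?_
  · rw [← map_add]
    exact hQ.C_mem (by linarith [neg_abs_le c])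
  · rw [← map_sub]
    exact hQ.C_mem (by linarith [le_abs_self c])

theorem neg_mem_bounded {f : MvPolynomial (Fin n) ℝ} (hf : f ∈ bounded Q) : -f ∈ bounded Q := by
  obtain ⟨l, hl, hadd, hsub⟩ := hf
  exact ⟨l, hl, by rwa [← sub_eq_add_neg], by rwa [sub_neg_eq_add]⟩

theorem add_mem_bounded (hQ : IsQuadraticModule Q) {f g : MvPolynomial (Fin n) ℝ}
    (hf : f ∈ bounded Q) (hg : g ∈ bounded Q) : f + g ∈ bounded Q := by
  obtain ⟨l, -, hf₁, hf₂⟩ := hf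
  obtain ⟨m, -, hg₁, hg₂⟩ := hg
  refine hQ.mem_bounded_of (l := l + m) ?_ ?_
  · convert hQ.add_mem hf₁ hg₁ using 1
    rw [map_add]
    ring
  · convert hQ.add_mem hf₂ hg₂ using 1
    rw [map_add]
    ring

theorem C_mul_mem_bounded (hQ : IsQuadraticModule Q) {c : ℝ} (hc : 0 ≤ c)
    {f : MvPolynomial (Fin n) ℝ} (hf : f ∈ bounded Q) : C c * f ∈ bounded Q := by
  obtain ⟨l, -, hadd, hsub⟩ := hf
  refine hQ.mem_bounded_of (l := c * l) ?_ ?_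
  · convert hQ.C_mul_mem hc hadd using 1
    rw [map_mul]
    ring
  · convert hQ.C_mul_mem hc hsub using 1
    rw [map_mul]
    ring

theorem sq_mem_bounded (hQ : IsQuadraticModule Q) {f : MvPolynomial (Fin n) ℝ}
    (hf : f ∈ bounded Q) : f ^ 2 ∈ bounded Q := by
  obtain ⟨l, hl, hadd, hsub⟩ := hf
  have hinv : (C (2 * l)⁻¹ * C (2 * l) : MvPolynomial (Fin n) ℝ) = 1 := by
    rw [← map_mul, inv_mul_cancel₀ (by positivity), map_one]
  have hprod := hQ.C_mul_mem (c := (2 * l)⁻¹) (by positivity)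
    (hQ.add_mem (hQ.sq_mul_mem (C l + f) hsub) (hQ.sq_mul_mem (C l - f) hadd))
  refine hQ.mem_bounded_of (l := l ^ 2) (hQ.add_mem (hQ.C_mem (by positivity)) (hQ.sq_mem f)) ?_
  convert hprod using 1
  simp only [map_mul, map_pow, map_ofNat] at hinv ⊢
  linear_combination (-(C l ^ 2 - f ^ 2)) * hinv

theorem mul_mem_bounded (hQ : IsQuadraticModule Q) {f g : MvPolynomial (Fin n) ℝ}
    (hf : f ∈ bounded Q) (hg : g ∈ bounded Q) : f * g ∈ bounded Q := by
  have hquarter : (C (1 / 4 : ℝ) * 4 : MvPolynomial (Fin n) ℝ) = 1 := by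
    rw [← map_ofNat C 4, ← map_mul]
    norm_num
  have hpolar := hQ.C_mul_mem_bounded (c := 1 / 4) (by norm_num)
    (hQ.add_mem_bounded (hQ.sq_mem_bounded (hQ.add_mem_bounded hf hg))
      (neg_mem_bounded (hQ.sq_mem_bounded (hQ.add_mem_bounded hf (neg_mem_bounded hg)))))
  convert hpolar using 1
  linear_combination (-(f * g)) * hquarter

theorem mem_bounded_of_C_sub_sq_mem (hQ : IsQuadraticModule Q) {l : ℝ}
    {f : MvPolynomial (Fin n) ℝ} (hf : C l - f ^ 2 ∈ Q) : f ∈ bounded Q := by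
  have hhalf : (C (1 / 2 : ℝ) * 2 : MvPolynomial (Fin n) ℝ) = 1 := by
    rw [← map_ofNat C 2, ← map_mul]
    norm_num
  have hl' : (C ((l + 1) / 2) : MvPolynomial (Fin n) ℝ) = C (1 / 2) * (C l + 1) := by
    rw [← map_one C, ← map_add, ← map_mul]
    ring_nf
  refine hQ.mem_bounded_of (l := (l + 1) / 2) ?_ ?_
  · convert hQ.C_mul_mem (c := 1 / 2) (by norm_num) (hQ.add_mem (hQ.sq_mem (f + 1)) hf) using 1
    rw [hl']
    linear_combination (-f) * hhalf
  · convert hQ.C_mul_mem (c := 1 / 2) (by norm_num) (hQ.add_mem (hQ.sq_mem (f - 1)) hf) using 1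
    rw [hl']
    linear_combination f * hhalf

def boundedSubalgebra (hQ : IsQuadraticModule Q) : Subalgebra ℝ (MvPolynomial (Fin n) ℝ) where
  carrier := bounded Q
  mul_mem' := hQ.mul_mem_bounded
  add_mem' := hQ.add_mem_bounded
  algebraMap_mem' := hQ.C_mem_bounded

theorem boundedSubalgebra_eq_top (hQ : IsQuadraticModule Q)
    (hX : ∀ i, (X i : MvPolynomial (Fin n) ℝ) ∈ bounded Q) : hQ.boundedSubalgebra = ⊤ :=
  eq_top_iff.2 <| adjoin_range_X (R := ℝ) (σ := Fin n) ▸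
    Algebra.adjoin_le (Set.range_subset_iff.2 hX)

end IsQuadraticModule

/-- A quadratic module is Archimedean iff `λ − (X₁² + ⋯ + Xₙ²) ∈ Q` for some `λ > 0`. -/
theorem quadraticModule_archimedean_iff_sum_sq {n : ℕ} (Q : Set (MvPolynomial (Fin n) ℝ))
    (hQ : IsQuadraticModule Q) :
    IsScalarArchimedean Q ↔ ∃ l : ℝ, 0 < l ∧
      MvPolynomial.C l - ∑ i : Fin n, MvPolynomial.X i ^ 2 ∈ Q := by
  constructor
  · intro hArch
    obtain ⟨l, hl, -, hsub⟩ := hArch (∑ i : Fin n, X i ^ 2)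
    exact ⟨l, hl, hsub⟩
  · rintro ⟨l, -, hmem⟩ f
    have hX : ∀ i, (X i : MvPolynomial (Fin n) ℝ) ∈ IsQuadraticModule.bounded Q := fun i ↦
      hQ.mem_bounded_of_C_sub_sq_mem
        (hQ.sub_sq_mem_of_sub_sum_sq_mem hmem (Finset.mem_univ i))
    exact (hQ.boundedSubalgebra_eq_top hX ▸ Algebra.mem_top : f ∈ hQ.boundedSubalgebra)
end

section
/- Let 𝒢 ⊆ S_t(ℝ[X]) be any set of symmetric polynomial matrices. Then there exists a subset G ⊆ ℝ[X] such that K(𝒢) = K(G) and M(G)ᵗ ⊆ ℳ(𝒢), the quadratic module of S_t(ℝ[X]) generated by 𝒢. Moreover if 𝒢 is finite then G can be chosen finite, and if 𝒢 consists of homogeneous polynomial matrices then G consists of homogeneous polynomials. -/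
open MvPolynomial Matrix Finset

/-!
For a symmetric matrix `M` over a commutative ring and a vector `u`, the scaled Schur complement
`(uᵀ M u) M - (M u)(M u)ᵀ` annihilates `u` and keeps the kernel of `M`. Iterating it along a list
of vectors gives pivot products `q₁ q₂ ⋯ qₖ`, and each of them is a value `zᵀ M z` of the quadratic
form of `M` itself at an explicit vector `z` (`pivotVec`). Consequently `(zᵀ F z) • AᵀA` is the sum
of the conjugates `(z Aᵢ)ᵀ F (z Aᵢ)` over the rows `Aᵢ` of `A`, so it lies in `ℳ(𝒢)` for `F ∈ 𝒢`,
and the pivot products are nonnegative wherever `F ⪰ 0`.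

Conversely, over `ℝ`: if every pivot product of a symmetric `M` along at most `rank M` of the
vectors `eᵢ`, `eᵢ + eⱼ` is nonnegative, then `M ⪰ 0`. Either all the quadratic forms at these
vectors vanish, and then `M = 0` by polarization, or one of them is positive; then the Schur step
at that vector has smaller rank and is positive semidefinite by induction, which forces `M ⪰ 0`.

The scalar description of `𝒢` is the set of pivot products of its members along lists of at most
`t` such constant test vectors: finitely many per matrix, and homogeneous when the matrix is.
-/

section PivotProducts

variable {R : Type*} [CommRing R] {ι : Type*} [Fintype ι]

def schurStep (u : ι → R) (M : Matrix ι ι R) : Matrix ι ι R :=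
  (u ⬝ᵥ M *ᵥ u) • M - vecMulVec (M *ᵥ u) (M *ᵥ u)

def pivotProd : List (ι → R) → Matrix ι ι R → R
  | [], _ => 1
  | u :: L, M => (u ⬝ᵥ M *ᵥ u) * pivotProd L (schurStep u M)

def pivotVec : List (ι → R) → Matrix ι ι R → ι → R
  | [], _ => 0
  | [u], _ => u
  | u :: v :: L, M =>
      (u ⬝ᵥ M *ᵥ u) • pivotVec (v :: L) (schurStep u M)
        - ((M *ᵥ u) ⬝ᵥ pivotVec (v :: L) (schurStep u M)) • u

theorem Matrix.IsSymm.dotProduct_mulVec_comm {M : Matrix ι ι R} (hM : M.IsSymm) (u w : ι → R) :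
    u ⬝ᵥ M *ᵥ w = (M *ᵥ u) ⬝ᵥ w := by
  rw [dotProduct_mulVec, ← mulVec_transpose, hM.eq]

theorem Matrix.IsSymm.schurStep {M : Matrix ι ι R} (hM : M.IsSymm) (u : ι → R) :
    (schurStep u M).IsSymm :=
  (hM.smul _).sub (by simp [IsSymm, transpose_vecMulVec])

theorem schurStep_mulVec (u : ι → R) (M : Matrix ι ι R) (x : ι → R) :
    schurStep u M *ᵥ x = (u ⬝ᵥ M *ᵥ u) • (M *ᵥ x) - ((M *ᵥ u) ⬝ᵥ x) • (M *ᵥ u) := by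
  rw [schurStep, sub_mulVec, smul_mulVec, vecMulVec_mulVec, op_smul_eq_smul]

theorem dotProduct_schurStep_mulVec (u w : ι → R) (M : Matrix ι ι R) :
    w ⬝ᵥ schurStep u M *ᵥ w = (u ⬝ᵥ M *ᵥ u) * (w ⬝ᵥ M *ᵥ w) - ((M *ᵥ u) ⬝ᵥ w) ^ 2 := by
  rw [schurStep_mulVec, dotProduct_sub, dotProduct_smul, dotProduct_smul, smul_eq_mul,
    smul_eq_mul, dotProduct_comm w (M *ᵥ u), sq]

theorem pivotVec_dotProduct_mulVec :
    ∀ {L : List (ι → R)} {M : Matrix ι ι R}, L ≠ [] → M.IsSymm →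
      pivotVec L M ⬝ᵥ M *ᵥ pivotVec L M = pivotProd L M
  | [u], _, _, _ => by simp [pivotVec, pivotProd]
  | u :: v :: L, M, _, hM => by
      have ih := pivotVec_dotProduct_mulVec (List.cons_ne_nil v L) (hM.schurStep u)
      rw [pivotVec, pivotProd, ← ih, dotProduct_schurStep_mulVec]
      generalize pivotVec (v :: L) (schurStep u M) = w
      simp only [mulVec_sub, mulVec_smul, dotProduct_sub, sub_dotProduct, dotProduct_smul,
        smul_dotProduct, smul_eq_mul, hM.dotProduct_mulVec_comm u w, dotProduct_comm w (M *ᵥ u)]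
      ring

theorem transpose_vecMulVec_mul_mul_vecMulVec (z v : ι → R) (F : Matrix ι ι R) :
    (vecMulVec z v)ᵀ * F * vecMulVec z v = (z ⬝ᵥ F *ᵥ z) • vecMulVec v v := by
  rw [transpose_vecMulVec, vecMulVec_mul, vecMulVec_mul_vecMulVec, ← dotProduct_mulVec,
    vecMulVec_smul]

theorem sum_vecMulVec_rows_eq_transpose_mul_self (A : Matrix ι ι R) :
    ∑ i, vecMulVec (A i) (A i) = Aᵀ * A := by
  ext j k
  simp only [Matrix.sum_apply, vecMulVec_apply, mul_apply, transpose_apply]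

theorem dotProduct_mulVec_smul_transpose_mul_self (z : ι → R) (F A : Matrix ι ι R) :
    (z ⬝ᵥ F *ᵥ z) • (Aᵀ * A) = ∑ i, (vecMulVec z (A i))ᵀ * F * vecMulVec z (A i) := by
  simp only [← sum_vecMulVec_rows_eq_transpose_mul_self, Finset.smul_sum,
    transpose_vecMulVec_mul_mul_vecMulVec]

section Map

variable {S : Type*} [CommRing S] (f : R →+* S)

theorem comp_mulVec (M : Matrix ι ι R) (u : ι → R) : f ∘ (M *ᵥ u) = M.map f *ᵥ (f ∘ u) :=
  funext (f.map_mulVec M u)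

theorem map_dotProduct_mulVec (u : ι → R) (M : Matrix ι ι R) :
    f (u ⬝ᵥ M *ᵥ u) = (f ∘ u) ⬝ᵥ M.map f *ᵥ (f ∘ u) := by
  rw [f.map_dotProduct, comp_mulVec]

theorem map_schurStep (u : ι → R) (M : Matrix ι ι R) :
    (schurStep u M).map f = schurStep (f ∘ u) (M.map f) := by
  ext i j
  simp only [schurStep, map_apply, Matrix.sub_apply, Matrix.smul_apply, smul_eq_mul,
    vecMulVec_apply, map_sub, map_mul, map_dotProduct_mulVec, RingHom.map_mulVec]

theorem map_pivotProd : ∀ (L : List (ι → R)) (M : Matrix ι ι R),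
    f (pivotProd L M) = pivotProd (L.map (f ∘ ·)) (M.map f)
  | [], _ => map_one f
  | u :: L, M => by
      rw [List.map_cons, pivotProd, pivotProd, map_mul, map_dotProduct_mulVec, map_pivotProd,
        map_schurStep]

end Map

end PivotProducts

section TestVectors

variable {ι : Type*} [DecidableEq ι]

def testVec {R : Type*} [Semiring R] : ι ⊕ ι × ι → ι → R
  | .inl i => Pi.single i 1
  | .inr (i, j) => Pi.single i 1 + Pi.single j 1

theorem comp_testVec {R S : Type*} [Semiring R] [Semiring S] (f : R →+* S) (c : ι ⊕ ι × ι) :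
    f ∘ testVec c = testVec c := by
  rcases c with i | ⟨i, j⟩ <;> ext k <;> simp [testVec, Pi.single_apply, apply_ite f]

theorem map_pivotProd_testVec {R S : Type*} [CommRing R] [CommRing S] [Fintype ι] (f : R →+* S)
    (L : List (ι ⊕ ι × ι)) (M : Matrix ι ι R) :
    f (pivotProd (L.map testVec) M) = pivotProd (L.map testVec) (M.map f) := by
  rw [map_pivotProd, List.map_map]
  congr 2
  exact funext (comp_testVec f)

theorem eq_zero_of_forall_testVec {R : Type*} [CommRing R] [NoZeroDivisors R] [CharZero R]
    [Fintype ι] {M : Matrix ι ι R} (hM : M.IsSymm)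
    (h : ∀ c, testVec c ⬝ᵥ M *ᵥ testVec c = 0) : M = 0 := by
  have hdiag (i : ι) : M i i = 0 := by simpa [testVec, mulVec_single] using h (.inl i)
  ext i j
  simpa [testVec, mulVec_add, mulVec_single, hdiag, hM.apply i j] using h (.inr (i, j))

theorem isHomogeneous_testVec {σ R : Type*} [CommSemiring R] (c : ι ⊕ ι × ι) (i : ι) :
    (testVec c i : MvPolynomial σ R).IsHomogeneous 0 := by
  rw [← comp_testVec C c]
  exact isHomogeneous_C σ _

-- Nonempty, since `pivotProd [] M = 1` is not a value of the quadratic form of `M`.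
def testLists (ι : Type*) (k : ℕ) : Set (List (ι ⊕ ι × ι)) := {L | L ≠ [] ∧ L.length ≤ k}

theorem testLists_finite (ι : Type*) [Finite ι] (k : ℕ) : (testLists ι k).Finite :=
  (List.finite_length_le _ k).subset fun _ hL => hL.2

end TestVectors

section Detection

variable {ι : Type*} [Fintype ι]

theorem rank_schurStep_lt {K : Type*} [Field K] {M : Matrix ι ι K} (hM : M.IsSymm) {u : ι → K}
    (hu : u ⬝ᵥ M *ᵥ u ≠ 0) : (schurStep u M).rank < M.rank := by
  have hle : LinearMap.ker M.mulVecLin ≤ LinearMap.ker (schurStep u M).mulVecLin := by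
    intro x hx
    rw [LinearMap.mem_ker, mulVecLin_apply] at hx ⊢
    rw [schurStep_mulVec, hx, ← hM.dotProduct_mulVec_comm, hx]
    simp
  have hu_mem : u ∈ LinearMap.ker (schurStep u M).mulVecLin := by
    rw [LinearMap.mem_ker, mulVecLin_apply, schurStep_mulVec, dotProduct_comm, sub_self]
  have hu_not_mem : u ∉ LinearMap.ker M.mulVecLin := fun h ↦ hu <| by
    rw [LinearMap.mem_ker, mulVecLin_apply] at h
    rw [h, dotProduct_zero]
  have hker := Submodule.finrank_lt_finrank_of_lt <|
    lt_of_le_of_ne hle fun h ↦ hu_not_mem (h ▸ hu_mem)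
  have hM_nullity := M.mulVecLin.finrank_range_add_finrank_ker
  have hS_nullity := (schurStep u M).mulVecLin.finrank_range_add_finrank_ker
  unfold Matrix.rank
  omega

theorem Matrix.PosSemidef.of_schurStep {M : Matrix ι ι ℝ} (hM : M.IsSymm) {u : ι → ℝ}
    (hu : 0 < u ⬝ᵥ M *ᵥ u) (hS : (schurStep u M).PosSemidef) : M.PosSemidef := by
  refine .of_dotProduct_mulVec_nonneg (isHermitian_iff_isSymm.2 hM) fun x ↦ ?_
  have hx := hS.dotProduct_mulVec_nonneg x
  rw [star_trivial, dotProduct_schurStep_mulVec] at hx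
  rw [star_trivial]
  exact nonneg_of_mul_nonneg_right (by nlinarith [sq_nonneg ((M *ᵥ u) ⬝ᵥ x)]) hu

theorem Matrix.PosSemidef.pivotProd_nonneg {M : Matrix ι ι ℝ} (hM : M.PosSemidef)
    {L : List (ι → ℝ)} (hL : L ≠ []) : 0 ≤ pivotProd L M := by
  rw [← pivotVec_dotProduct_mulVec hL (isHermitian_iff_isSymm.1 hM.1)]
  simpa using hM.dotProduct_mulVec_nonneg (pivotVec L M)

variable [DecidableEq ι]

theorem posSemidef_of_pivotProd_testVec_nonneg {M : Matrix ι ι ℝ} (hM : M.IsSymm) {k : ℕ}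
    (hk : M.rank ≤ k) (h : ∀ L ∈ testLists ι k, 0 ≤ pivotProd (L.map testVec) M) :
    M.PosSemidef := by
  induction k using Nat.strong_induction_on generalizing M with
  | _ k ih =>
    by_cases hzero : ∀ c, testVec c ⬝ᵥ M *ᵥ testVec c = 0
    · rw [eq_zero_of_forall_testVec hM hzero]
      exact .zero
    obtain ⟨c, hc⟩ := not_forall.1 hzero
    have hrank : (schurStep (testVec c) M).rank < k := (rank_schurStep_lt hM hc).trans_le hk
    have hpos : 0 < testVec c ⬝ᵥ M *ᵥ testVec c := by
      have h1 := h [c] ⟨List.cons_ne_nil _ _, Nat.succ_le_of_lt ((Nat.zero_le _).trans_lt hrank)⟩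
      rw [List.map_singleton, pivotProd, pivotProd, mul_one] at h1
      exact h1.lt_of_ne' hc
    refine .of_schurStep hM hpos <| ih _ hrank (hM.schurStep _) le_rfl fun L hL ↦ ?_
    have h1 := h (c :: L) ⟨List.cons_ne_nil _ _, Nat.succ_le_of_lt (hL.2.trans_lt hrank)⟩
    rw [List.map_cons, pivotProd] at h1
    exact nonneg_of_mul_nonneg_right h1 hpos

end Detection

section Homogeneity

variable {σ R ι : Type*} [CommRing R] [Fintype ι]

theorem isHomogeneous_dotProduct {v w : ι → MvPolynomial σ R} {a b : ℕ}
    (hv : ∀ i, (v i).IsHomogeneous a) (hw : ∀ i, (w i).IsHomogeneous b) :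
    (v ⬝ᵥ w).IsHomogeneous (a + b) :=
  IsHomogeneous.sum _ _ _ fun i _ ↦ (hv i).mul (hw i)

theorem isHomogeneous_schurStep {M : Matrix ι ι (MvPolynomial σ R)} {u : ι → MvPolynomial σ R}
    {d a : ℕ} (hM : ∀ i j, (M i j).IsHomogeneous d) (hu : ∀ i, (u i).IsHomogeneous a) (i j : ι) :
    (schurStep u M i j).IsHomogeneous ((d + a) + (d + a)) := by
  have hMu (i : ι) : ((M *ᵥ u) i).IsHomogeneous (d + a) := isHomogeneous_dotProduct (hM i) hu
  have hq : (u ⬝ᵥ M *ᵥ u).IsHomogeneous (a + (d + a)) := isHomogeneous_dotProduct hu hMu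
  have h₁ := hq.mul (hM i j)
  rw [show a + (d + a) + d = (d + a) + (d + a) by ring] at h₁
  exact h₁.sub ((hMu i).mul (hMu j))

theorem exists_isHomogeneous_pivotProd :
    ∀ (L : List (ι → MvPolynomial σ R)) {M : Matrix ι ι (MvPolynomial σ R)} {d : ℕ},
      (∀ u ∈ L, ∃ a, ∀ i, (u i).IsHomogeneous a) → (∀ i j, (M i j).IsHomogeneous d) →
      ∃ e, (pivotProd L M).IsHomogeneous e
  | [], _, _, _, _ => ⟨0, isHomogeneous_one σ R⟩
  | u :: L, M, d, hL, hM => by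
      obtain ⟨a, hu⟩ := hL u List.mem_cons_self
      obtain ⟨e, he⟩ := exists_isHomogeneous_pivotProd L
        (fun v hv ↦ hL v (List.mem_cons_of_mem u hv)) (isHomogeneous_schurStep hM hu)
      exact ⟨_, (isHomogeneous_dotProduct hu fun i ↦ isHomogeneous_dotProduct (hM i) hu).mul he⟩

end Homogeneity

namespace IsMatQuadraticModule

variable {n t : ℕ} {Q : Set (PolyMat n t)}

theorem zero_mem (hQ : IsMatQuadraticModule Q) : 0 ∈ Q := by
  simpa using hQ.2.2 0 1 hQ.1

theorem sum_mem (hQ : IsMatQuadraticModule Q) {α : Type*} (s : Finset α) {F : α → PolyMat n t}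
    (hF : ∀ i ∈ s, F i ∈ Q) : ∑ i ∈ s, F i ∈ Q :=
  Finset.sum_induction F (· ∈ Q) hQ.2.1 hQ.zero_mem hF

theorem isQuadraticModule_setOf_forall_smul_mem (hQ : IsMatQuadraticModule Q) :
    IsQuadraticModule {p : MvPolynomial (Fin n) ℝ | ∀ B : PolyMat n t, p • (Bᵀ * B) ∈ Q} := by
  refine ⟨fun B ↦ ?_, fun f g hf hg B ↦ ?_, fun a f hf B ↦ ?_⟩
  · simpa using hQ.2.2 B 1 hQ.1
  · rw [add_smul]
    exact hQ.2.1 _ _ (hf B) (hg B)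
  · convert hf (a • B) using 1
    rw [transpose_smul, smul_mul, Matrix.mul_smul, smul_smul, smul_smul]
    ring_nf

theorem dotProduct_mulVec_smul_mem (hQ : IsMatQuadraticModule Q) {F : PolyMat n t} (hF : F ∈ Q)
    (z : Fin t → MvPolynomial (Fin n) ℝ) (B : PolyMat n t) : (z ⬝ᵥ F *ᵥ z) • (Bᵀ * B) ∈ Q := by
  rw [dotProduct_mulVec_smul_transpose_mul_self]
  exact hQ.sum_mem _ fun i _ ↦ hQ.2.2 _ _ hF

theorem liftT_QM_subset (hQ : IsMatQuadraticModule Q) {G : Set (MvPolynomial (Fin n) ℝ)}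
    (hG : ∀ g ∈ G, ∀ B : PolyMat n t, g • (Bᵀ * B) ∈ Q) : liftT (QM G) t ⊆ Q := by
  rintro _ ⟨k, m, A, hm, rfl⟩
  have hQM : QM G ⊆ {p : MvPolynomial (Fin n) ℝ | ∀ B : PolyMat n t, p • (Bᵀ * B) ∈ Q} :=
    Set.sInter_subset_of_mem ⟨hQ.isQuadraticModule_setOf_forall_smul_mem, hG⟩
  exact hQ.sum_mem _ fun i _ ↦ hQM (hm i) (A i)

end IsMatQuadraticModule

section ScalarDescription

variable {n t : ℕ} {𝒢 : Set (PolyMat n t)}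

def scalarDescription (𝒢 : Set (PolyMat n t)) : Set (MvPolynomial (Fin n) ℝ) :=
  Set.image2 (fun F L ↦ pivotProd (L.map testVec) F) 𝒢 (testLists (Fin t) t)

theorem KMat_eq_KSet_scalarDescription (h𝒢 : ∀ F ∈ 𝒢, F.IsSymm) :
    KMat 𝒢 = KSet (scalarDescription 𝒢) := by
  ext x
  constructor
  · rintro hx _ ⟨F, hF, L, hL, rfl⟩
    rw [map_pivotProd_testVec]
    exact (hx F hF).pivotProd_nonneg (by simpa using hL.1)
  · intro hx F hF
    refine posSemidef_of_pivotProd_testVec_nonneg ((h𝒢 F hF).map _) (rank_le_width _)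
      fun L hL ↦ ?_
    rw [evalMat, ← map_pivotProd_testVec]
    exact hx _ ⟨F, hF, L, hL, rfl⟩

theorem liftT_QM_scalarDescription_subset (h𝒢 : ∀ F ∈ 𝒢, F.IsSymm) :
    liftT (QM (scalarDescription 𝒢)) t ⊆ MatQM 𝒢 := by
  rintro P hP Q ⟨hQ, h𝒢Q⟩
  refine IsMatQuadraticModule.liftT_QM_subset hQ ?_ hP
  rintro _ ⟨F, hF, L, hL, rfl⟩ B
  dsimp only
  rw [← pivotVec_dotProduct_mulVec (by simpa using hL.1) (h𝒢 F hF)]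
  exact IsMatQuadraticModule.dotProduct_mulVec_smul_mem hQ (h𝒢Q hF) _ B

theorem scalarDescription_finite (h𝒢 : 𝒢.Finite) : (scalarDescription 𝒢).Finite :=
  h𝒢.image2 _ (testLists_finite _ _)

theorem exists_isHomogeneous_of_mem_scalarDescription
    (h𝒢 : ∀ A ∈ 𝒢, ∃ d : ℕ, ∀ i j, (A i j).IsHomogeneous d) {g : MvPolynomial (Fin n) ℝ}
    (hg : g ∈ scalarDescription 𝒢) : ∃ e : ℕ, g.IsHomogeneous e := by
  obtain ⟨F, hF, L, -, rfl⟩ := hg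
  obtain ⟨d, hd⟩ := h𝒢 F hF
  refine exists_isHomogeneous_pivotProd _ (fun u hu ↦ ?_) hd
  obtain ⟨c, -, rfl⟩ := List.mem_map.1 hu
  exact ⟨0, isHomogeneous_testVec c⟩

end ScalarDescription

/-- Cimprič: every set `𝒢` of symmetric polynomial matrices admits a scalar description `G`
with `K(𝒢) = K(G)` and `M(G)ᵗ ⊆ ℳ(𝒢)`; `G` can be taken finite if `𝒢` is, and
homogeneous if `𝒢` consists of homogeneous matrices. -/
theorem cimpric_scalar_description {n t : ℕ} (𝒢 : Set (PolyMat n t))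
    (h𝒢sym : ∀ G ∈ 𝒢, Matrix.IsSymm G) :
    ∃ G : Set (MvPolynomial (Fin n) ℝ),
      KMat 𝒢 = KSet G ∧ liftT (QM G) t ⊆ MatQM 𝒢 ∧
      (𝒢.Finite → G.Finite) ∧
      ((∀ A ∈ 𝒢, ∃ d : ℕ, ∀ i j, (A i j).IsHomogeneous d) →
        ∀ g ∈ G, ∃ e : ℕ, g.IsHomogeneous e) :=
  ⟨scalarDescription 𝒢, KMat_eq_KSet_scalarDescription h𝒢sym,
    liftT_QM_scalarDescription_subset h𝒢sym, scalarDescription_finite,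
    fun h𝒢hom _ ↦ exists_isHomogeneous_of_mem_scalarDescription h𝒢hom⟩
end

section
/- Farkas' lemma, affine form: if g₁,…,g_m are affine-linear polynomials on ℝⁿ with K = {x : gᵢ(x) ≥ 0 ∀i} non-empty, and f is an affine-linear polynomial with f ≥ 0 on K, then f = λ₀ + λ₁g₁ + ⋯ + λ_m g_m for some λ₀,…,λ_m ≥ 0. -/
open MvPolynomial Matrix Finset

/-!
Homogenize at a point `x₀ ∈ K`: an affine function `h` becomes the linear functional
`(v, t) ↦ h.linear v + t * h x₀` on `V × 𝕜`, which at `(x -ᵥ x₀, 1)` takes the value `h x`.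
The homogenized `f` is nonnegative on the cone cut out by `t ≥ 0` and the homogenized `gᵢ`:
points of the cone with `t > 0` rescale to points of `K`, and since `x₀ ∈ K` every point of the
cone is a limit of such points along `t ↦ t + ε`. Evaluating at `t = 1` a representation of the
homogenized `f` as a nonnegative combination of `t` and the homogenized `gᵢ` gives the claim.

Such a representation is the homogeneous Farkas lemma, proved by induction on the constraints:
if some `x₀` satisfies all constraints but `φₐ` and has `ψ x₀ < 0`, then `φₐ x₀ < 0`, and
precomposing with the projection onto `ker φₐ` along `x₀` removes `φₐ`. The remainder
`ψ - ∑ cᵢ φᵢ` then vanishes on `ker φₐ`, so it is a multiple of `φₐ`, with a nonnegative factor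
since both are negative at `x₀`.
-/

namespace Module.Dual

theorem eq_zero_of_forall_nonneg {R V : Type*} [CommRing R] [PartialOrder R] [IsOrderedRing R]
    [AddCommGroup V] [Module R V] {ψ : Module.Dual R V} (h : ∀ x, 0 ≤ ψ x) : ψ = 0 :=
  LinearMap.ext fun x => le_antisymm (by simpa using h (-x)) (h x)

variable {𝕜 V : Type*} [Field 𝕜] [AddCommGroup V] [Module 𝕜 V]

noncomputable def projKerAlong (φ : Module.Dual 𝕜 V) (x₀ : V) : V →ₗ[𝕜] V :=
  LinearMap.id - φ.smulRight ((φ x₀)⁻¹ • x₀)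

variable {φ : Module.Dual 𝕜 V} {x₀ : V}

@[simp]
theorem projKerAlong_apply (x : V) : projKerAlong φ x₀ x = x - (φ x / φ x₀) • x₀ := by
  simp [projKerAlong, smul_smul, div_eq_mul_inv]

theorem apply_projKerAlong (hx₀ : φ x₀ ≠ 0) (x : V) : φ (projKerAlong φ x₀ x) = 0 := by
  simp [hx₀]

theorem eq_smul_of_apply_projKerAlong_eq_zero {θ : Module.Dual 𝕜 V}
    (h : ∀ x, θ (projKerAlong φ x₀ x) = 0) : θ = (θ x₀ / φ x₀) • φ := by
  ext x
  have := h x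
  simp only [projKerAlong_apply, map_sub, map_smul, smul_eq_mul] at this
  simp only [LinearMap.smul_apply, smul_eq_mul]
  linear_combination this

theorem exists_nonneg_sum_smul_eq_of_forall_nonneg [LinearOrder 𝕜] [IsStrictOrderedRing 𝕜]
    {ι : Type*} (s : Finset ι) (φ : ι → Module.Dual 𝕜 V) (ψ : Module.Dual 𝕜 V)
    (h : ∀ x, (∀ i ∈ s, 0 ≤ φ i x) → 0 ≤ ψ x) :
    ∃ c : ι → 𝕜, (∀ i, 0 ≤ c i) ∧ ψ = ∑ i ∈ s, c i • φ i := by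
  classical
  induction s using Finset.induction_on generalizing φ ψ with
  | empty => exact ⟨0, fun _ => le_rfl, by simpa using eq_zero_of_forall_nonneg (by simpa using h)⟩
  | insert a s ha ih =>
    suffices ∃ t : 𝕜, 0 ≤ t ∧ ∃ c : ι → 𝕜, (∀ i, 0 ≤ c i) ∧ ψ = t • φ a + ∑ i ∈ s, c i • φ i by
      obtain ⟨t, ht, c, hc, rfl⟩ := this
      refine ⟨Function.update c a t, fun i => ?_, ?_⟩
      · rcases eq_or_ne i a with rfl | hi <;> simp [*]
      · rw [Finset.sum_insert ha, Function.update_self]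
        congr 1
        exact Finset.sum_congr rfl fun i hi => by
          rw [Function.update_of_ne (ne_of_mem_of_not_mem hi ha)]
    by_cases hs : ∀ x, (∀ i ∈ s, 0 ≤ φ i x) → 0 ≤ ψ x
    · exact ⟨0, le_rfl, by simpa using ih φ ψ hs⟩
    push Not at hs
    obtain ⟨x₀, hx₀, hψx₀⟩ := hs
    have hφa : φ a x₀ < 0 := by
      by_contra! hφa
      exact hψx₀.not_ge (h x₀ (Finset.forall_mem_insert .. |>.mpr ⟨hφa, hx₀⟩))
    set P := projKerAlong (φ a) x₀
    obtain ⟨c, hc, hψc⟩ := ih (fun i => φ i ∘ₗ P) (ψ ∘ₗ P) fun x hx =>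
      h (P x) (Finset.forall_mem_insert .. |>.mpr ⟨(apply_projKerAlong hφa.ne x).ge, hx⟩)
    set θ := ψ - ∑ i ∈ s, c i • φ i
    have hθ : θ = (θ x₀ / φ a x₀) • φ a := by
      refine eq_smul_of_apply_projKerAlong_eq_zero fun x => ?_
      simpa [θ, P, sub_eq_zero] using LinearMap.congr_fun hψc x
    have hθx₀ : θ x₀ < 0 := by
      have : 0 ≤ ∑ i ∈ s, c i * φ i x₀ :=
        Finset.sum_nonneg fun i hi => mul_nonneg (hc i) (hx₀ i hi)
      simp only [θ, LinearMap.sub_apply, LinearMap.sum_apply, LinearMap.smul_apply, smul_eq_mul]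
      linarith
    exact ⟨θ x₀ / φ a x₀, (div_pos_of_neg_of_neg hθx₀ hφa).le, c, hc, by
      rw [← hθ, sub_add_cancel]⟩

end Module.Dual

theorem nonneg_of_forall_pos_nonneg_add_mul {𝕜 : Type*} [Field 𝕜] [LinearOrder 𝕜]
    [IsStrictOrderedRing 𝕜] {a b : 𝕜} (h : ∀ ε > 0, 0 ≤ a + ε * b) : 0 ≤ a := by
  by_contra! ha
  rcases le_or_gt b 0 with hb | hb
  · linarith [h 1 one_pos]
  · have := h (-a / (2 * b)) (div_pos (neg_pos.mpr ha) (by positivity))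
    field_simp at this
    linarith

namespace AffineMap

variable {𝕜 V P : Type*} [Field 𝕜] [AddCommGroup V] [Module 𝕜 V] [AddTorsor V P]

def homogenize (f : P →ᵃ[𝕜] 𝕜) (x₀ : P) : Module.Dual 𝕜 (V × 𝕜) :=
  f.linear ∘ₗ LinearMap.fst 𝕜 V 𝕜 + f x₀ • LinearMap.snd 𝕜 V 𝕜

section homogenize

variable (f : P →ᵃ[𝕜] 𝕜) (x₀ : P)

@[simp]
theorem homogenize_apply (v : V) (t : 𝕜) : f.homogenize x₀ (v, t) = f.linear v + t * f x₀ := by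
  simp [homogenize, mul_comm]

theorem homogenize_vsub_one (x : P) : f.homogenize x₀ (x -ᵥ x₀, 1) = f x := by
  simp

theorem homogenize_eq_mul {t : 𝕜} (ht : t ≠ 0) (v : V) :
    f.homogenize x₀ (v, t) = t * f (t⁻¹ • v +ᵥ x₀) := by
  simp [f.map_vadd, mul_add, ht]

end homogenize

theorem exists_nonneg_eq_add_sum_mul_of_forall_nonneg [LinearOrder 𝕜] [IsStrictOrderedRing 𝕜]
    {ι : Type*} [Fintype ι] (g : ι → P →ᵃ[𝕜] 𝕜) (f : P →ᵃ[𝕜] 𝕜)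
    (hK : {x | ∀ i, 0 ≤ g i x}.Nonempty) (hf : ∀ x, (∀ i, 0 ≤ g i x) → 0 ≤ f x) :
    ∃ (l₀ : 𝕜) (l : ι → 𝕜), 0 ≤ l₀ ∧ (∀ i, 0 ≤ l i) ∧ ∀ x, f x = l₀ + ∑ i, l i * g i x := by
  obtain ⟨x₀, hx₀⟩ := hK
  let φ : Option ι → Module.Dual 𝕜 (V × 𝕜) :=
    fun o => o.elim (LinearMap.snd 𝕜 V 𝕜) fun i => (g i).homogenize x₀
  have hcone : ∀ w : V × 𝕜, (∀ o ∈ Finset.univ, 0 ≤ φ o w) → 0 ≤ f.homogenize x₀ w := by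
    rintro ⟨v, t⟩ hw
    simp only [Finset.mem_univ, forall_const, Option.forall] at hw
    obtain ⟨ht, hg⟩ := hw
    have hshift : ∀ (h : P →ᵃ[𝕜] 𝕜) (ε : 𝕜),
        h.homogenize x₀ (v, t + ε) = h.homogenize x₀ (v, t) + ε * h x₀ := by
      intro h ε
      simp only [homogenize_apply]
      ring
    refine nonneg_of_forall_pos_nonneg_add_mul (b := f x₀) fun ε hε => ?_
    have htε : 0 < t + ε := by
      simp only [φ, Option.elim, LinearMap.snd_apply] at ht
      linarith
    have hmem : ∀ i, 0 ≤ g i ((t + ε)⁻¹ • v +ᵥ x₀) := fun i => by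
      refine nonneg_of_mul_nonneg_right ?_ htε
      rw [← homogenize_eq_mul _ _ htε.ne', hshift]
      exact add_nonneg (hg i) (mul_nonneg hε.le (hx₀ i))
    rw [← hshift, homogenize_eq_mul _ _ htε.ne']
    exact mul_nonneg htε.le (hf _ hmem)
  obtain ⟨c, hc, hfc⟩ :=
    Module.Dual.exists_nonneg_sum_smul_eq_of_forall_nonneg Finset.univ φ _ hcone
  refine ⟨c none, fun i => c (some i), hc _, fun i => hc _, fun x => ?_⟩
  simpa [Fintype.sum_option, φ, homogenize_vsub_one] using
    LinearMap.congr_fun hfc (x -ᵥ x₀, 1)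

end AffineMap

namespace MvPolynomial

variable {R σ : Type*}

theorem eq_zero_or_eq_single_one_of_mem_support [CommSemiring R] {p : MvPolynomial σ R}
    (hp : p.totalDegree ≤ 1) {s : σ →₀ ℕ} (hs : s ∈ p.support) :
    s = 0 ∨ ∃ j, s = Finsupp.single j 1 := by
  have := (le_totalDegree hs).trans hp
  interval_cases h : s.sum fun _ e => e
  · exact .inl ((Finsupp.degree_eq_zero_iff s).mp h)
  · exact .inr ((Finsupp.sum_eq_one_iff s).mp h)

theorem eq_C_add_sum_C_mul_X_of_totalDegree_le_one [CommSemiring R] [Fintype σ]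
    {p : MvPolynomial σ R} (hp : p.totalDegree ≤ 1) :
    p = C (p.coeff 0) + ∑ j, C (p.coeff (Finsupp.single j 1)) * X j := by
  classical
  ext s
  simp only [coeff_add, coeff_C, coeff_sum, coeff_C_mul, coeff_X]
  by_cases hs : s ∈ p.support
  · rcases eq_zero_or_eq_single_one_of_mem_support hp hs with rfl | ⟨j, rfl⟩
    · simp
    · simp [Finsupp.single_left_inj, eq_comm (a := (0 : σ →₀ ℕ))]
  · have h0 := notMem_support_iff.mp hs
    have hX (j : σ) :
        coeff (Finsupp.single j 1) p * (if Finsupp.single j 1 = s then 1 else 0) = 0 := by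
      split_ifs with h <;> simp [h, h0]
    split_ifs with h
    · simp [h, h0, hX]
    · simp [h0, hX]

noncomputable def affinePart [CommRing R] [Fintype σ] (p : MvPolynomial σ R) :
    (σ → R) →ᵃ[R] R :=
  (∑ j, p.coeff (Finsupp.single j 1) • LinearMap.proj j).toAffineMap +
    AffineMap.const R (σ → R) (p.coeff 0)

theorem eval_eq_affinePart [CommRing R] [Fintype σ] {p : MvPolynomial σ R}
    (hp : p.totalDegree ≤ 1) (x : σ → R) : eval x p = p.affinePart x := by
  conv_lhs => rw [eq_C_add_sum_C_mul_X_of_totalDegree_le_one hp]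
  simp [affinePart, add_comm]

end MvPolynomial

/-- Affine form of Farkas' lemma. -/
theorem farkas_affine {n m : ℕ} (g : Fin m → MvPolynomial (Fin n) ℝ)
    (hg : ∀ i, (g i).totalDegree ≤ 1)
    (hne : {x : Fin n → ℝ | ∀ i, 0 ≤ MvPolynomial.eval x (g i)}.Nonempty)
    (f : MvPolynomial (Fin n) ℝ) (hf : f.totalDegree ≤ 1)
    (hpos : ∀ x ∈ {x : Fin n → ℝ | ∀ i, 0 ≤ MvPolynomial.eval x (g i)},
      0 ≤ MvPolynomial.eval x f) :
    ∃ (l0 : ℝ) (l : Fin m → ℝ), 0 ≤ l0 ∧ (∀ i, 0 ≤ l i) ∧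
      f = MvPolynomial.C l0 + ∑ i, MvPolynomial.C (l i) * g i := by
  simp only [eval_eq_affinePart (hg _), eval_eq_affinePart hf] at hne hpos
  obtain ⟨l0, l, hl0, hl, hfl⟩ :=
    AffineMap.exists_nonneg_eq_add_sum_mul_of_forall_nonneg _ _ hne hpos
  refine ⟨l0, l, hl0, hl, MvPolynomial.funext fun x => ?_⟩
  simp [eval_eq_affinePart hf, eval_eq_affinePart (hg _), hfl]
end

section
/- Let G = {g₁,…,g_m} ⊆ ℝ[X₁,…,Xₙ], λ > 0, and G' = G ∪ {X₁,…,Xₙ} ∪ {λ − ΣXⱼ, ΣXⱼ − λ}. Then the semiring generated by G' equals P₀P(G) + ⟨λ − Σⱼ Xⱼ⟩, where P₀ is the set of polynomials with nonnegative coefficients, P(G) the semiring generated by G, P₀P(G) the set of finite sums Σᵢ h_{αᵢ} g₁^{(αᵢ)₁}⋯g_m^{(αᵢ)_m} with h_{αᵢ} ∈ P₀, and ⟨λ − ΣXⱼ⟩ the ideal generated by λ − Σⱼ Xⱼ. -/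
open MvPolynomial Matrix Finset

section AuxSemiring
open MvPolynomial Finset

variable {n m : ℕ}

private lemma P0_C' {r : ℝ} (hr : 0 ≤ r) : (MvPolynomial.C r : MvPolynomial (Fin n) ℝ) ∈ P0 := by
  intro s; rw [coeff_C]; split <;> simp [hr]

private lemma P0_mul' {p q : MvPolynomial (Fin n) ℝ} (hp : p ∈ P0) (hq : q ∈ P0) :
    p * q ∈ P0 := by
  intro s; rw [coeff_mul]
  exact Finset.sum_nonneg fun x _ => mul_nonneg (hp x.1) (hq x.2)

private lemma P0_X' (j : Fin n) : (X j : MvPolynomial (Fin n) ℝ) ∈ P0 := by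
  intro s; rw [coeff_X']; split <;> simp

private lemma P0_one' : (1 : MvPolynomial (Fin n) ℝ) ∈ P0 := by
  simpa using P0_C' (n := n) (r := 1) zero_le_one

private noncomputable def posPart (p : MvPolynomial (Fin n) ℝ) : MvPolynomial (Fin n) ℝ :=
  ∑ s ∈ p.support, monomial s (max (p.coeff s) 0)

private lemma coeff_posPart (p : MvPolynomial (Fin n) ℝ) (t : Fin n →₀ ℕ) :
    (posPart p).coeff t = if t ∈ p.support then max (p.coeff t) 0 else 0 := by
  rw [show posPart p = ∑ s ∈ p.support, monomial s (max (p.coeff s) 0) from rfl,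
    MvPolynomial.coeff_sum]
  simp only [coeff_monomial]
  rw [Finset.sum_ite_eq' p.support t (fun s => max (p.coeff s) 0)]

private lemma posPart_mem (p : MvPolynomial (Fin n) ℝ) : posPart p ∈ P0 := by
  intro s; rw [coeff_posPart]; split <;> simp [le_max_right]

private lemma posPart_sub (p : MvPolynomial (Fin n) ℝ) :
    p = posPart p - posPart (-p) := by
  apply MvPolynomial.ext
  intro t
  rw [coeff_sub, coeff_posPart, coeff_posPart]
  by_cases ht : t ∈ p.support
  · have ht' : t ∈ (-p).support := by simpa using ht
    rw [if_pos ht, if_pos ht', coeff_neg]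
    rcases le_total (p.coeff t) 0 with h | h
    · rw [max_eq_right h, max_eq_left (by linarith)]; ring
    · rw [max_eq_left h, max_eq_right (by linarith)]; ring
  · have ht' : t ∉ (-p).support := by simpa using ht
    rw [if_neg ht, if_neg ht']
    have : p.coeff t = 0 := by simpa using (MvPolynomial.notMem_support_iff.mp ht)
    simp [this]

/-- The set `P₀·P(G)` of finite sums `Σ hᵢ g^{αᵢ}`. -/
def AA (g : Fin m → MvPolynomial (Fin n) ℝ) : Set (MvPolynomial (Fin n) ℝ) :=
  {q | ∃ (k : ℕ) (h : Fin k → MvPolynomial (Fin n) ℝ) (α : Fin k → Fin m → ℕ),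
      (∀ i, h i ∈ P0) ∧ q = ∑ i, h i * ∏ j, g j ^ α i j}

variable (g : Fin m → MvPolynomial (Fin n) ℝ)

private lemma AA_single {h : MvPolynomial (Fin n) ℝ} (hh : h ∈ P0) (α : Fin m → ℕ) :
    h * ∏ j, g j ^ α j ∈ AA g :=
  ⟨1, fun _ => h, fun _ => α, fun _ => hh, by simp⟩

private lemma AA_zero : (0 : MvPolynomial (Fin n) ℝ) ∈ AA g :=
  ⟨0, fun i => i.elim0, fun i => i.elim0, fun i => i.elim0, by simp⟩

private lemma AA_add {p q : MvPolynomial (Fin n) ℝ} (hp : p ∈ AA g) (hq : q ∈ AA g) :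
    p + q ∈ AA g := by
  obtain ⟨k1, h1, α1, hh1, rfl⟩ := hp
  obtain ⟨k2, h2, α2, hh2, rfl⟩ := hq
  refine ⟨k1 + k2, Fin.append h1 h2, Fin.append α1 α2, ?_, ?_⟩
  · intro i
    refine Fin.addCases (fun i => ?_) (fun i => ?_) i
    · simpa [Fin.append_left] using hh1 i
    · simpa [Fin.append_right] using hh2 i
  · rw [Fin.sum_univ_add]
    simp [Fin.append_left, Fin.append_right]

private lemma AA_mul {p q : MvPolynomial (Fin n) ℝ} (hp : p ∈ AA g) (hq : q ∈ AA g) :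
    p * q ∈ AA g := by
  obtain ⟨k1, h1, α1, hh1, rfl⟩ := hp
  obtain ⟨k2, h2, α2, hh2, rfl⟩ := hq
  refine ⟨k1 * k2,
    fun i => h1 (finProdFinEquiv.symm i).1 * h2 (finProdFinEquiv.symm i).2,
    fun i j => α1 (finProdFinEquiv.symm i).1 j + α2 (finProdFinEquiv.symm i).2 j,
    fun i => P0_mul' (hh1 _) (hh2 _), ?_⟩
  rw [Finset.sum_mul_sum, ← Finset.sum_product', Finset.univ_product_univ]
  refine Fintype.sum_equiv finProdFinEquiv _ _ ?_
  intro x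
  simp only [Equiv.symm_apply_apply, pow_add, Finset.prod_mul_distrib]
  ring

private lemma AA_C {r : ℝ} (hr : 0 ≤ r) :
    (MvPolynomial.C r : MvPolynomial (Fin n) ℝ) ∈ AA g := by
  simpa using AA_single g (P0_C' hr) (fun _ => 0)

private lemma AA_X (j : Fin n) : (X j : MvPolynomial (Fin n) ℝ) ∈ AA g := by
  simpa using AA_single g (P0_X' j) (fun _ => 0)

private lemma AA_g (i : Fin m) : g i ∈ AA g := by
  have := AA_single g P0_one' (fun j => if j = i then 1 else 0)
  have hprod : ∏ j, g j ^ (if j = i then 1 else 0) = g i := by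
    rw [Finset.prod_eq_single i (fun j _ hj => by simp [hj]) (by simp)]
    simp
  rw [hprod, one_mul] at this
  exact this

variable {M : Set (MvPolynomial (Fin n) ℝ)}

private lemma cone_one (hM : IsSemiringCone M) : (1 : MvPolynomial (Fin n) ℝ) ∈ M := by
  simpa using hM.2.2 1 zero_le_one

private lemma cone_zero (hM : IsSemiringCone M) : (0 : MvPolynomial (Fin n) ℝ) ∈ M := by
  simpa using hM.2.2 0 le_rfl

private lemma cone_pow (hM : IsSemiringCone M) {f : MvPolynomial (Fin n) ℝ} (hf : f ∈ M) (e : ℕ) : f ^ e ∈ M := by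
  induction e with
  | zero => simpa using cone_one hM
  | succ e ih => rw [pow_succ]; exact hM.2.1 _ _ ih hf

private lemma cone_P0 (hM : IsSemiringCone M) (hX : ∀ j : Fin n, (X j : MvPolynomial (Fin n) ℝ) ∈ M)
    {p : MvPolynomial (Fin n) ℝ} (hp : p ∈ P0) : p ∈ M := by
  rw [p.as_sum]
  refine Finset.sum_induction _ (· ∈ M) (fun a b ha hb => hM.1 a b ha hb) (cone_zero hM) ?_
  intro v _
  rw [monomial_eq]
  refine hM.2.1 _ _ (hM.2.2 _ (hp v)) ?_
  exact Finset.prod_induction _ (· ∈ M) (fun a b ha hb => hM.2.1 a b ha hb) (cone_one hM)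
    (fun j _ => cone_pow hM (hX j) _)

private lemma cone_AA (hM : IsSemiringCone M) (hX : ∀ j : Fin n, (X j : MvPolynomial (Fin n) ℝ) ∈ M)
    (hg : ∀ i, g i ∈ M) {q : MvPolynomial (Fin n) ℝ} (hq : q ∈ AA g) : q ∈ M := by
  obtain ⟨k, h, α, hh, rfl⟩ := hq
  refine Finset.sum_induction _ (· ∈ M) (fun a b ha hb => hM.1 a b ha hb) (cone_zero hM) ?_
  intro i _
  refine hM.2.1 _ _ (cone_P0 hM hX (hh i)) ?_
  exact Finset.prod_induction _ (· ∈ M) (fun a b ha hb => hM.2.1 a b ha hb) (cone_one hM)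
    (fun j _ => cone_pow hM (hg j) _)

end AuxSemiring

/-- The semiring generated by `G' = G ∪ {X₁,…,Xₙ} ∪ {λ − ΣXⱼ, ΣXⱼ − λ}` equals
`P₀P(G) + ⟨λ − ΣⱼXⱼ⟩`. -/
theorem semiring_of_Gprime_eq {n m : ℕ} (g : Fin m → MvPolynomial (Fin n) ℝ)
    (lam : ℝ) (hlam : 0 < lam) :
    SR (Set.range g ∪ Set.range (MvPolynomial.X : Fin n → MvPolynomial (Fin n) ℝ) ∪
        {MvPolynomial.C lam - ∑ j : Fin n, MvPolynomial.X j,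
         (∑ j : Fin n, MvPolynomial.X j) - MvPolynomial.C lam}) =
      {p | ∃ q ∈ {q : MvPolynomial (Fin n) ℝ |
              ∃ (k : ℕ) (h : Fin k → MvPolynomial (Fin n) ℝ) (α : Fin k → Fin m → ℕ),
                (∀ i, h i ∈ P0) ∧ q = ∑ i, h i * ∏ j, g j ^ α i j},
            ∃ r ∈ Ideal.span {MvPolynomial.C lam - ∑ j : Fin n, MvPolynomial.X j},
              p = q + r} := by
  set d : MvPolynomial (Fin n) ℝ := MvPolynomial.C lam - ∑ j : Fin n, MvPolynomial.X j with hd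
  set S : Set (MvPolynomial (Fin n) ℝ) :=
    {p | ∃ q ∈ AA g, ∃ r ∈ Ideal.span {d}, p = q + r} with hS
  have hSeq : {p : MvPolynomial (Fin n) ℝ | ∃ q ∈ {q : MvPolynomial (Fin n) ℝ |
              ∃ (k : ℕ) (h : Fin k → MvPolynomial (Fin n) ℝ) (α : Fin k → Fin m → ℕ),
                (∀ i, h i ∈ P0) ∧ q = ∑ i, h i * ∏ j, g j ^ α i j},
            ∃ r ∈ Ideal.span {MvPolynomial.C lam - ∑ j : Fin n, MvPolynomial.X j},
              p = q + r} = S := rfl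
  rw [hSeq]
  have hcone : IsSemiringCone S := by
    refine ⟨?_, ?_, ?_⟩
    · rintro f f' ⟨q1, hq1, r1, hr1, rfl⟩ ⟨q2, hq2, r2, hr2, rfl⟩
      exact ⟨q1 + q2, AA_add g hq1 hq2, r1 + r2, Ideal.add_mem _ hr1 hr2, by ring⟩
    · rintro f f' ⟨q1, hq1, r1, hr1, rfl⟩ ⟨q2, hq2, r2, hr2, rfl⟩
      refine ⟨q1 * q2, AA_mul g hq1 hq2, q1 * r2 + r1 * q2 + r1 * r2, ?_, by ring⟩
      exact Ideal.add_mem _ (Ideal.add_mem _ (Ideal.mul_mem_left _ _ hr2)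
        (Ideal.mul_mem_right _ _ hr1)) (Ideal.mul_mem_right _ _ hr1)
    · intro r hr
      exact ⟨MvPolynomial.C r, AA_C g hr, 0, Ideal.zero_mem _, by ring⟩
  have hdmem : d ∈ Ideal.span {d} := Ideal.subset_span rfl
  have hsub : Set.range g ∪ Set.range (MvPolynomial.X : Fin n → MvPolynomial (Fin n) ℝ) ∪
      {d, (∑ j : Fin n, MvPolynomial.X j) - MvPolynomial.C lam} ⊆ S := by
    rintro p (hp | hp)
    · rcases hp with ⟨i, rfl⟩ | ⟨j, rfl⟩
      · exact ⟨g i, AA_g g i, 0, Ideal.zero_mem _, by ring⟩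
      · exact ⟨MvPolynomial.X j, AA_X g j, 0, Ideal.zero_mem _, by ring⟩
    · rcases hp with rfl | hp
      · exact ⟨0, AA_zero g, d, hdmem, by ring⟩
      · rw [Set.mem_singleton_iff] at hp
        subst hp
        refine ⟨0, AA_zero g, (∑ j : Fin n, MvPolynomial.X j) - MvPolynomial.C lam, ?_, by ring⟩
        have : (∑ j : Fin n, MvPolynomial.X j) - MvPolynomial.C lam = -d := by rw [hd]; ring
        rw [this]
        exact neg_mem hdmem
  apply Set.eq_of_subset_of_subset
  · intro p hp
    exact hp S ⟨hcone, hsub⟩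
  · rintro p ⟨q, hq, r, hr, rfl⟩
    intro M hMmem
    obtain ⟨hM, hG⟩ := hMmem
    have hX : ∀ j : Fin n, (MvPolynomial.X j : MvPolynomial (Fin n) ℝ) ∈ M := fun j =>
      hG (Or.inl (Or.inr ⟨j, rfl⟩))
    have hg : ∀ i, g i ∈ M := fun i => hG (Or.inl (Or.inl ⟨i, rfl⟩))
    have hdM : d ∈ M := hG (Or.inr (Or.inl rfl))
    have hndM : -d ∈ M := by
      have : -d = (∑ j : Fin n, MvPolynomial.X j) - MvPolynomial.C lam := by rw [hd]; ring
      rw [this]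
      exact hG (Or.inr (Or.inr rfl))
    have hqM : q ∈ M := cone_AA g hM hX hg hq
    have hrM : r ∈ M := by
      obtain ⟨f, rfl⟩ := Ideal.mem_span_singleton.mp hr
      have hdecomp : d * f = d * posPart f + (-d) * posPart (-f) := by
        conv_lhs => rw [posPart_sub f]
        ring
      rw [hdecomp]
      exact hM.1 _ _ (hM.2.1 _ _ hdM (cone_P0 hM hX (posPart_mem f)))
        (hM.2.1 _ _ hndM (cone_P0 hM hX (posPart_mem (-f))))
    exact hM.1 _ _ hqM hrM
end

section
/- Matrix Pólya Positivstellensatz: let F ∈ S_t(ℝ[X₁,…,Xₙ]) be a homogeneous symmetric polynomial matrix of even degree d with F(x) ≻ 0 for all x ∈ ℝ₊ⁿ \ {0}. Then there exist N > 0, homogeneous polynomials hᵢ with nonnegative coefficients, and Aᵢ ∈ M_t(ℝ[X]) such that (X₁ + ⋯ + Xₙ)ᴺ F = Σᵢ₌₁ˡ hᵢ AᵢᵀAᵢ. -/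
open MvPolynomial Matrix Finset

/-!
The coefficient of `X ^ γ` (with `|γ| = s = N + d`) in `(X₁ + ⋯ + Xₙ) ^ N * f`, for `f` a form of
degree `d`, is `N! s^d / γ!` times `∑_β f_β ∏ᵢ (γᵢ/s) (γᵢ/s - 1/s) ⋯ (γᵢ/s - (βᵢ - 1)/s)`, a
perturbation of size `O(1/s)` of `f (γ / s)` with `γ / s` in the standard simplex. As
`vᵀ F(y) v > 0` on the compact set (simplex) × (unit sphere), the perturbed quadratic forms stay
positive for `s` large, so every coefficient matrix of `(X₁ + ⋯ + Xₙ) ^ N • F` is positive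
semidefinite. Writing each one as `Bᵀ B` gives `(X₁ + ⋯ + Xₙ) ^ N • F = ∑_γ X^γ • (Bᵧᵀ Bᵧ)`.
-/

open Filter
open scoped Nat Topology

theorem Finsupp.multinomial_sub_mul_prod_factorial {σ : Type*} [Fintype σ] {β γ : σ →₀ ℕ}
    (h : β ≤ γ) :
    (γ - β).multinomial * ∏ i, (γ i)! = (γ - β).degree ! * ∏ i, (γ i).descFactorial (β i) := by
  have hfactorial : ∀ i, (γ i)! = (γ i).descFactorial (β i) * ((γ - β) i)! := fun i => by
    rw [tsub_apply, mul_comm, Nat.factorial_mul_descFactorial (h i)]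
  rw [Finset.prod_congr rfl fun i _ => hfactorial i, Finset.prod_mul_distrib, degree_eq_sum,
    ← Nat.multinomial_spec, multinomial_of_support_subset (subset_univ _)]
  ring

namespace MvPolynomial

variable {σ : Type*} [Fintype σ]

/-- `f(y)` with every power `yᵢ ^ b` replaced by the falling product
`yᵢ (yᵢ - ε) ⋯ (yᵢ - (b - 1) ε)`; see `coeff_sum_X_pow_mul_eq` for its role. -/
noncomputable def fallingEval (ε : ℝ) (y : σ → ℝ) (f : MvPolynomial σ ℝ) : ℝ :=
  ∑ β ∈ f.support, coeff β f * ∏ i, ∏ k ∈ range (β i), (y i - k * ε)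

theorem fallingEval_zero (y : σ → ℝ) : fallingEval 0 y = eval y := by
  ext f
  simp [fallingEval, eval_eq']

theorem continuous_fallingEval (f : MvPolynomial σ ℝ) :
    Continuous fun p : ℝ × (σ → ℝ) => fallingEval p.1 p.2 f := by
  unfold fallingEval
  fun_prop

theorem pow_mul_fallingEval_inv {f : MvPolynomial σ ℝ} {d : ℕ} (hf : f.IsHomogeneous d)
    (γ : σ →₀ ℕ) {s : ℝ} (hs : s ≠ 0) :
    s ^ d * fallingEval s⁻¹ (fun i => γ i / s) f =
      ∑ β ∈ f.support, coeff β f * ∏ i, ((γ i).descFactorial (β i) : ℝ) := by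
  rw [fallingEval, mul_sum]
  refine sum_congr rfl fun β hβ => ?_
  have hβd : ∑ i, β i = d := by
    rw [← Finsupp.degree_eq_sum, ← hf (mem_support_iff.mp hβ), Finsupp.degree_eq_weight_one]
    rfl
  have hfactor : ∀ i, ∏ k ∈ range (β i), ((γ i : ℝ) / s - k * s⁻¹) =
      s⁻¹ ^ β i * (γ i).descFactorial (β i) := by
    intro i
    rw [← descPochhammer_eval_eq_descFactorial ℝ, descPochhammer_eval_eq_prod_range,
      ← card_range (β i), ← prod_const, card_range, ← prod_mul_distrib]
    refine prod_congr rfl fun k _ => ?_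
    field_simp
  simp_rw [hfactor, prod_mul_distrib, prod_pow_eq_pow_sum, hβd, inv_pow]
  field_simp

theorem coeff_sum_X_pow_mul_mul_prod_factorial {f : MvPolynomial σ ℝ} {d N : ℕ}
    (hf : f.IsHomogeneous d) {γ : σ →₀ ℕ} (hγ : γ.degree = N + d) :
    coeff γ ((∑ i, X i) ^ N * f) * ∏ i, ((γ i)! : ℝ) =
      N ! * ∑ β ∈ f.support, coeff β f * ∏ i, ((γ i).descFactorial (β i) : ℝ) := by
  conv_lhs => rw [f.as_sum]
  rw [mul_sum, coeff_sum, sum_mul, mul_sum]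
  refine sum_congr rfl fun β hβ => ?_
  rw [coeff_mul_monomial']
  split_ifs with hle
  · have hdeg : (γ - β).degree = N := by
      have hβd : β.degree = d := by
        rw [Finsupp.degree_eq_weight_one]; exact hf (mem_support_iff.mp hβ)
      have := congrArg Finsupp.degree (tsub_add_cancel_of_le hle)
      rw [map_add, hγ, hβd] at this
      omega
    have hnat := congrArg (Nat.cast : ℕ → ℝ) (Finsupp.multinomial_sub_mul_prod_factorial hle)
    push_cast [hdeg] at hnat
    rw [coeff_sum_X_pow_of_fintype, if_pos (show (γ - β).sum (fun _ m => m) = N from hdeg)]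
    linear_combination coeff β f * hnat
  · obtain ⟨i, hi⟩ : ∃ i, γ i < β i := by simpa [Finsupp.le_def] using hle
    rw [zero_mul, prod_eq_zero (mem_univ i)
      (by rw [Nat.descFactorial_eq_zero_iff_lt.mpr hi, Nat.cast_zero]), mul_zero, mul_zero]

theorem coeff_sum_X_pow_mul_eq {f : MvPolynomial σ ℝ} {d N : ℕ} (hf : f.IsHomogeneous d)
    {γ : σ →₀ ℕ} (hγ : γ.degree = N + d) (hNd : N + d ≠ 0) :
    coeff γ ((∑ i, X i) ^ N * f) = N ! * (N + d : ℝ) ^ d / (∏ i, ((γ i)! : ℝ)) *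
      fallingEval (N + d : ℝ)⁻¹ (fun i => γ i / (N + d : ℝ)) f := by
  have hs : (N + d : ℝ) ≠ 0 := by exact_mod_cast hNd
  rw [eq_comm, div_mul_eq_mul_div, div_eq_iff (prod_ne_zero_iff.mpr fun i _ => by positivity),
    mul_assoc, pow_mul_fallingEval_inv hf γ hs, coeff_sum_X_pow_mul_mul_prod_factorial hf hγ]

end MvPolynomial

theorem IsCompact.eventually_forall_dotProduct_mulVec_pos {X Y ι : Type*} [TopologicalSpace X]
    [TopologicalSpace Y] [Fintype ι] {M : X → Y → Matrix ι ι ℝ}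
    (hM : Continuous (Function.uncurry M)) {K : Set Y} (hK : IsCompact K) {x₀ : X}
    (h₀ : ∀ y ∈ K, ∀ v ≠ 0, 0 < v ⬝ᵥ M x₀ y *ᵥ v) :
    ∀ᶠ x in 𝓝 x₀, ∀ y ∈ K, ∀ v ≠ 0, 0 < v ⬝ᵥ M x y *ᵥ v := by
  have hsphere : ∀ᶠ x in 𝓝 x₀, ∀ p ∈ K ×ˢ Metric.sphere (0 : ι → ℝ) 1,
      0 < p.2 ⬝ᵥ M x p.1 *ᵥ p.2 := by
    refine (hK.prod (isCompact_sphere 0 1)).eventually_forall_of_forall_eventually ?_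
    rintro ⟨y, u⟩ ⟨hy, hu⟩
    have hcont : Continuous fun z : X × Y × (ι → ℝ) => z.2.2 ⬝ᵥ M z.1 z.2.1 *ᵥ z.2.2 :=
      continuous_snd.snd.dotProduct
        ((hM.comp (continuous_fst.prodMk continuous_snd.fst)).matrix_mulVec continuous_snd.snd)
    have hu0 : u ≠ 0 := ne_zero_of_mem_unit_sphere ⟨u, hu⟩
    exact hcont.continuousAt.eventually (lt_mem_nhds (h₀ y hy u hu0))
  filter_upwards [hsphere] with x hx y hy v hv
  have hnorm : 0 < ‖v‖ := norm_pos_iff.mpr hv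
  have hu : ‖v‖⁻¹ • v ∈ Metric.sphere (0 : ι → ℝ) 1 := by
    simp [norm_smul, hnorm.ne']
  have hscale : v ⬝ᵥ M x y *ᵥ v = ‖v‖ ^ 2 * ((‖v‖⁻¹ • v) ⬝ᵥ M x y *ᵥ (‖v‖⁻¹ • v)) := by
    rw [mulVec_smul, dotProduct_smul, smul_dotProduct, smul_eq_mul, smul_eq_mul]
    field_simp
  rw [hscale]
  exact mul_pos (by positivity) (hx (y, _) ⟨hy, hu⟩)

namespace Matrix

variable {σ ι : Type*}

theorem posSemidef_map_coeff_sum_X_pow_smul [Fintype σ] [Fintype ι]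
    {F : Matrix ι ι (MvPolynomial σ ℝ)} (hF : F.IsSymm) {d N : ℕ}
    (hFhom : ∀ i j, (F i j).IsHomogeneous d) (hNd : N + d ≠ 0)
    (hpos : ∀ y ∈ stdSimplex ℝ σ, ∀ v ≠ 0,
      0 < v ⬝ᵥ F.map (fallingEval (N + d : ℝ)⁻¹ y) *ᵥ v) (γ : σ →₀ ℕ) :
    (((∑ i, X i : MvPolynomial σ ℝ) ^ N • F).map (coeff γ)).PosSemidef := by
  by_cases hγ : γ.degree = N + d
  · have hs : (0 : ℝ) < N + d := by exact_mod_cast Nat.pos_of_ne_zero hNd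
    set y : σ → ℝ := fun i => γ i / (N + d : ℝ)
    have hy : y ∈ stdSimplex ℝ σ := by
      refine ⟨fun i => by positivity, ?_⟩
      rw [← sum_div, div_eq_one_iff_eq hs.ne']
      exact_mod_cast (Finsupp.degree_eq_sum γ).symm.trans hγ
    have hmap : ((∑ i, X i : MvPolynomial σ ℝ) ^ N • F).map (coeff γ) =
        (N ! * (N + d : ℝ) ^ d / ∏ i, ((γ i)! : ℝ)) • F.map (fallingEval (N + d : ℝ)⁻¹ y) := by
      ext i j
      simp [coeff_sum_X_pow_mul_eq (hFhom i j) hγ hNd, y]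
    have hsymm : (F.map (fallingEval (N + d : ℝ)⁻¹ y)).IsHermitian := by
      rw [IsHermitian, conjTranspose_eq_transpose_of_trivial]
      exact hF.map _
    rw [hmap]
    have hc : 0 < N ! * (N + d : ℝ) ^ d / ∏ i, ((γ i)! : ℝ) :=
      div_pos (mul_pos (by positivity) (pow_pos hs d)) (prod_pos fun i _ => by positivity)
    exact ((PosDef.of_dotProduct_mulVec_pos hsymm (by simpa using hpos y hy)).smul hc).posSemidef
  · have hhom : ∀ i j, ((∑ k, X k) ^ N * F i j).IsHomogeneous (N + d) := fun i j => by
      simpa using ((IsHomogeneous.sum _ _ 1 fun k _ => isHomogeneous_X ℝ k).pow N).mul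
        (hFhom i j)
    have hzero : ((∑ i, X i : MvPolynomial σ ℝ) ^ N • F).map (coeff γ) = 0 := by
      ext i j
      exact (hhom i j).coeff_eq_zero hγ
    rw [hzero]
    exact .zero

theorem eq_sum_monomial_smul_map_coeff (P : Matrix ι ι (MvPolynomial σ ℝ))
    {S : Finset (σ →₀ ℕ)} (hS : ∀ i j, (P i j).support ⊆ S) :
    P = ∑ γ ∈ S, monomial γ (1 : ℝ) • (P.map (coeff γ)).map C := by
  refine Matrix.ext fun i j => ?_
  simp only [sum_apply, smul_apply, map_apply, smul_eq_mul]
  conv_lhs => rw [(P i j).as_sum]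
  refine (sum_subset (hS i j) fun γ _ hγ => ?_).trans (sum_congr rfl fun γ _ => ?_)
  · rw [notMem_support_iff.mp hγ, monomial_zero]
  · rw [mul_comm, C_mul_monomial, mul_one]

theorem exists_eq_sum_monomial_smul_transpose_mul_self [Fintype ι]
    (P : Matrix ι ι (MvPolynomial σ ℝ)) (hP : ∀ γ, (P.map (coeff γ)).PosSemidef) :
    ∃ (l : ℕ) (γ : Fin l → σ →₀ ℕ) (A : Fin l → Matrix ι ι (MvPolynomial σ ℝ)),
      P = ∑ k, monomial (γ k) (1 : ℝ) • ((A k)ᵀ * A k) := by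
  classical
  have hsqrt : ∀ γ, ∃ B : Matrix ι ι ℝ, P.map (coeff γ) = Bᵀ * B := fun γ => by
    open scoped MatrixOrder in
    obtain ⟨B, hB⟩ := CStarAlgebra.nonneg_iff_eq_star_mul_self.mp (hP γ).nonneg
    exact ⟨B, hB⟩
  choose B hB using hsqrt
  set S := univ.biUnion fun p : ι × ι => (P p.1 p.2).support
  have hS : ∀ i j, (P i j).support ⊆ S := fun i j =>
    subset_biUnion_of_mem (fun p : ι × ι => (P p.1 p.2).support) (mem_univ (i, j))
  refine ⟨S.card, fun k => S.equivFin.symm k, fun k => (B (S.equivFin.symm k)).map C, ?_⟩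
  conv_lhs => rw [P.eq_sum_monomial_smul_map_coeff hS]
  rw [← sum_coe_sort S, ← S.equivFin.symm.sum_comp]
  refine sum_congr rfl fun k _ => ?_
  rw [hB, ← transpose_map, ← Matrix.map_mul]

end Matrix

theorem monomial_mem_P0 {n : ℕ} (γ : Fin n →₀ ℕ) {c : ℝ} (hc : 0 ≤ c) : monomial γ c ∈ P0 := by
  classical
  intro β
  rw [coeff_monomial]
  split_ifs
  exacts [hc, le_rfl]

theorem polya_matrix_general {n t : ℕ} (F : PolyMat n t) (hFsym : F.IsSymm)
    (d : ℕ) (hFhom : ∀ i j, (F i j).IsHomogeneous d)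
    (hpos : ∀ x : Fin n → ℝ, (∀ i, 0 ≤ x i) → x ≠ 0 → (evalMat x F).PosDef) :
    ∃ N : ℕ, 0 < N ∧
      ∃ (l : ℕ) (h : Fin l → MvPolynomial (Fin n) ℝ) (A : Fin l → PolyMat n t),
        (∀ i, h i ∈ P0 ∧ ∃ e : ℕ, (h i).IsHomogeneous e) ∧
        (((∑ i : Fin n, MvPolynomial.X i : MvPolynomial (Fin n) ℝ)) ^ N) • F =
          ∑ i, h i • ((A i)ᵀ * A i) := by
  have hpos₀ : ∀ y ∈ stdSimplex ℝ (Fin n), ∀ v ≠ 0, 0 < v ⬝ᵥ F.map (fallingEval 0 y) *ᵥ v := by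
    intro y hy v hv
    have hy0 : y ≠ 0 := by
      rintro rfl
      simpa using hy.2
    rw [fallingEval_zero]
    simpa [evalMat] using (hpos y hy.1 hy0).dotProduct_mulVec_pos hv
  have hnear := (isCompact_stdSimplex ℝ (Fin n)).eventually_forall_dotProduct_mulVec_pos
    (M := fun ε y => F.map (fallingEval ε y))
    (continuous_matrix fun i j => continuous_fallingEval (F i j)) hpos₀
  have hinv : Tendsto (fun N : ℕ => ((N : ℝ) + d)⁻¹) atTop (𝓝 0) :=
    tendsto_inv_atTop_zero.comp (tendsto_atTop_add_const_right _ _ tendsto_natCast_atTop_atTop)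
  obtain ⟨N, hN, hNpos⟩ := ((hinv.eventually hnear).and (eventually_gt_atTop 0)).exists
  obtain ⟨l, γ, A, hA⟩ := Matrix.exists_eq_sum_monomial_smul_transpose_mul_self _
    (Matrix.posSemidef_map_coeff_sum_X_pow_smul hFsym hFhom (by omega) hN)
  exact ⟨N, hNpos, l, fun k => monomial (γ k) 1, A,
    fun k => ⟨monomial_mem_P0 _ zero_le_one, _, isHomogeneous_monomial _ rfl⟩, hA⟩

/-- Matrix version of Pólya's Positivstellensatz. -/
theorem polya_matrix {n t : ℕ} (F : PolyMat n t) (hFsym : F.IsSymm)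
    (d : ℕ) (hdeven : Even d) (hFhom : ∀ i j, (F i j).IsHomogeneous d)
    (hpos : ∀ x : Fin n → ℝ, (∀ i, 0 ≤ x i) → x ≠ 0 → (evalMat x F).PosDef) :
    ∃ N : ℕ, 0 < N ∧
      ∃ (l : ℕ) (h : Fin l → MvPolynomial (Fin n) ℝ) (A : Fin l → PolyMat n t),
        (∀ i, h i ∈ P0 ∧ ∃ e : ℕ, (h i).IsHomogeneous e) ∧
        (((∑ i : Fin n, MvPolynomial.X i : MvPolynomial (Fin n) ℝ)) ^ N) • F =
          ∑ i, h i • ((A i)ᵀ * A i) :=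
  polya_matrix_general F hFsym d hFhom hpos
end

section
/- Marshall's theorem (scalar case): for a finite set G ⊆ ℝ[X₁,…,Xₙ] and f ∈ ℝ[X], the following are equivalent: (1) f(x) ≥ 0 for all x ∈ K(G); (2) there exists an integer k ≥ 0 such that for all rational ε > 0 there exists an integer l ≥ 0 with pˡ(f + ε pᵏ) ∈ M(G), where p = 1 + X₁² + ⋯ + Xₙ². -/
open MvPolynomial Matrix Finset

namespace MarshallAux

variable {N : ℕ}

abbrev Poly (N : ℕ) := MvPolynomial (Fin N) ℝ

abbrev IsQM (M : Set (Poly N)) : Prop := IsQuadraticModule M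

inductive Sos : Poly N → Prop
  | zero : Sos 0
  | sq_add (a : Poly N) {s : Poly N} : Sos s → Sos (a ^ 2 + s)

theorem Sos.sq (a : Poly N) : Sos (a ^ 2) := by
  simpa using Sos.sq_add a Sos.zero

theorem Sos.add {s t : Poly N} (hs : Sos s) (ht : Sos t) : Sos (s + t) := by
  induction hs with
  | zero => simpa
  | sq_add a h ih => simpa [add_assoc] using Sos.sq_add a ih

theorem Sos.one : Sos (1 : Poly N) := by
  simpa using Sos.sq (1 : Poly N)

section QM

variable {M : Set (Poly N)}

theorem IsQM.one_mem (hM : IsQM M) : (1 : Poly N) ∈ M := hM.1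

theorem IsQM.add_mem (hM : IsQM M) {a b : Poly N} (ha : a ∈ M) (hb : b ∈ M) : a + b ∈ M := hM.2.1 a b ha hb

theorem IsQM.sqmul_mem (hM : IsQM M) (a : Poly N) {b : Poly N} (hb : b ∈ M) : a ^ 2 * b ∈ M := hM.2.2 a b hb

theorem IsQM.sq_mem (hM : IsQM M) (a : Poly N) : a ^ 2 ∈ M := by
  simpa using hM.sqmul_mem a hM.one_mem

theorem IsQM.zero_mem (hM : IsQM M) : (0 : Poly N) ∈ M := by
  simpa using hM.sqmul_mem 0 hM.one_mem

theorem IsQM.sos_mul_mem (hM : IsQM M) {s b : Poly N} (hs : Sos s) (hb : b ∈ M) : s * b ∈ M := by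
  induction hs with
  | zero => simpa using hM.zero_mem
  | sq_add a h ih => simpa [add_mul] using hM.add_mem (hM.sqmul_mem a hb) ih

theorem IsQM.sos_mem (hM : IsQM M) {s : Poly N} (hs : Sos s) : s ∈ M := by
  simpa using hM.sos_mul_mem hs hM.one_mem

theorem IsQM.smul_mem (hM : IsQM M) {r : ℝ} (hr : 0 ≤ r) {b : Poly N} (hb : b ∈ M) : C r * b ∈ M := by
  have : C r * b = (C (Real.sqrt r)) ^ 2 * b := by
    rw [← map_pow, Real.sq_sqrt hr]
  rw [this]; exact hM.sqmul_mem _ hb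

theorem IsQM.const_mem (hM : IsQM M) {r : ℝ} (hr : 0 ≤ r) : (C r : Poly N) ∈ M := by
  simpa using hM.smul_mem hr hM.one_mem

theorem IsQM.neg_one_of_neg_const (hM : IsQM M) {r : ℝ} (hr : r < 0) (h : (C r : Poly N) ∈ M) :
    (-1 : Poly N) ∈ M := by
  have h2 : C (-r⁻¹) * C r ∈ M := hM.smul_mem (neg_nonneg.mpr (inv_nonpos.mpr hr.le)) h
  rw [← _root_.map_mul] at h2
  have : -r⁻¹ * r = -1 := by
    rw [neg_mul, inv_mul_cancel₀ (ne_of_lt hr)]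
  rw [this] at h2; simpa using h2

/-- products trick : b₁ b₂ (b₁+b₂) ∈ M -/
theorem IsQM.mul_mul_add_mem (hM : IsQM M) {b₁ b₂ : Poly N} (h1 : b₁ ∈ M) (h2 : b₂ ∈ M) :
    b₁ * b₂ * (b₁ + b₂) ∈ M := by
  have : b₁ * b₂ * (b₁ + b₂) = b₁ ^ 2 * b₂ + b₂ ^ 2 * b₁ := by ring
  rw [this]; exact hM.add_mem (hM.sqmul_mem _ h2) (hM.sqmul_mem _ h1)

/-- If C r ± a ∈ M with r > 0 then C r² - a² ∈ M. -/
theorem IsQM.sq_bound (hM : IsQM M) {r : ℝ} (hr : 0 < r) {a : Poly N} (h1 : C r - a ∈ M) (h2 : C r + a ∈ M) :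
    (C (r ^ 2) : Poly N) - a ^ 2 ∈ M := by
  have key := hM.mul_mul_add_mem h1 h2
  have heq : (C r - a) * (C r + a) * ((C r - a) + (C r + a)) =
      C (2 * r) * (C (r ^ 2) - a ^ 2) := by
    rw [_root_.map_mul, map_pow, map_ofNat]; ring
  rw [heq] at key
  have key2 : C ((2 * r)⁻¹) * (C (2 * r) * (C (r ^ 2) - a ^ 2)) ∈ M :=
    hM.smul_mem (by positivity) key
  rw [← mul_assoc, ← _root_.map_mul, inv_mul_cancel₀ (by positivity), _root_.map_one, one_mul] at key2
  exact key2

/-- support elements absorb arbitrary multipliers -/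
theorem IsQM.supp_mul (hM : IsQM M) {v : Poly N} (hv : v ∈ M) (hv' : -v ∈ M) (a : Poly N) :
    a * v ∈ M ∧ -(a * v) ∈ M := by
  constructor
  · have h : (a + 1) ^ 2 * v + (a - 1) ^ 2 * (-v) ∈ M :=
      hM.add_mem (hM.sqmul_mem _ hv) (hM.sqmul_mem _ hv')
    have heq : (a + 1) ^ 2 * v + (a - 1) ^ 2 * (-v) = C 4 * (a * v) := by
      rw [map_ofNat]; ring
    rw [heq] at h
    have h2 : C (4⁻¹ : ℝ) * (C 4 * (a * v)) ∈ M := hM.smul_mem (by norm_num) h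
    rw [← mul_assoc, ← _root_.map_mul] at h2
    norm_num at h2; exact h2
  · have h : (a + 1) ^ 2 * (-v) + (a - 1) ^ 2 * v ∈ M :=
      hM.add_mem (hM.sqmul_mem _ hv') (hM.sqmul_mem _ hv)
    have heq : (a + 1) ^ 2 * (-v) + (a - 1) ^ 2 * v = C 4 * (-(a * v)) := by
      rw [map_ofNat]; ring
    rw [heq] at h
    have h2 : C (4⁻¹ : ℝ) * (C 4 * (-(a * v))) ∈ M := hM.smul_mem (by norm_num) h
    rw [← mul_assoc, ← _root_.map_mul] at h2
    norm_num at h2; exact h2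

end QM

/-- Archimedean property -/
def Arch (M : Set (Poly N)) : Prop := ∀ a : Poly N, ∃ r : ℝ, C r - a ∈ M ∧ C r + a ∈ M

theorem Sos.sqmul (a : Poly N) {s : Poly N} (hs : Sos s) : Sos (a ^ 2 * s) := by
  induction hs with
  | zero => simpa using Sos.zero
  | @sq_add b t h ih =>
      have heq : a ^ 2 * (b ^ 2 + t) = (a * b) ^ 2 + a ^ 2 * t := by ring
      rw [heq]
      exact Sos.sq_add _ ih

section Point

variable {M : Set (Poly N)}

/-- From a total, proper, Archimedean quadratic module we extract a point. -/
theorem exists_point (hM : IsQM M) (har : Arch M) (hp : (-1 : Poly N) ∉ M)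
    (htot : ∀ a : Poly N, a ∈ M ∨ -a ∈ M) :
    ∃ x : Fin N → ℝ, ∀ q ∈ M, 0 ≤ eval x q := by
  classical
  have hne : ∀ a : Poly N, ({r : ℝ | C r - a ∈ M}).Nonempty := by
    intro a; obtain ⟨r, h1, _⟩ := har a; exact ⟨r, h1⟩
  have hnegconst : ∀ w : ℝ, (C w : Poly N) ∈ M → 0 ≤ w := by
    intro w hw
    by_contra hlt
    exact hp (hM.neg_one_of_neg_const (lt_of_not_ge hlt) hw)
  have hbdd : ∀ a : Poly N, BddBelow {r : ℝ | C r - a ∈ M} := by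
    intro a
    obtain ⟨r₀, -, h₀⟩ := har a
    refine ⟨-r₀, fun r hr => ?_⟩
    have hsum := hM.add_mem hr h₀
    have heq : (C r - a) + (C r₀ + a) = (C (r + r₀) : Poly N) := by rw [map_add]; ring
    rw [heq] at hsum
    have := hnegconst _ hsum
    simp only [Set.mem_setOf_eq] at *
    linarith
  set α : Poly N → ℝ := fun a => sInf {r : ℝ | C r - a ∈ M} with hαdef
  have hlb : ∀ a : Poly N, ∀ r : ℝ, C r - a ∈ M → α a ≤ r := fun a r hr => csInf_le (hbdd a) hr
  have hmem_of_gt : ∀ a : Poly N, ∀ r : ℝ, α a < r → C r - a ∈ M := by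
    intro a r hr
    obtain ⟨s, hs, hsr⟩ := exists_lt_of_csInf_lt (hne a) hr
    have heq : (C r - a : Poly N) = C (r - s) + (C s - a) := by rw [map_sub]; ring
    rw [heq]
    exact hM.add_mem (hM.const_mem (by linarith)) hs
  have hmem_of_lt : ∀ a : Poly N, ∀ r : ℝ, r < α a → a - C r ∈ M := by
    intro a r hr
    rcases htot (C r - a) with h | h
    · exact absurd (hlb a r h) (not_le.mpr hr)
    · simpa using h
  have halphaC : ∀ r : ℝ, α (C r) = r := by
    intro r
    apply le_antisymm
    · exact hlb _ _ (by simpa using hM.zero_mem)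
    · refine le_csInf ⟨r, by simpa using hM.zero_mem⟩ ?_
      intro s hs
      have hmem : (C (s - r) : Poly N) ∈ M := by
        have : (C (s - r) : Poly N) = C s - C r := by rw [map_sub]
        rw [this]; exact hs
      have := hnegconst _ hmem; linarith
  have hnonneg : ∀ q ∈ M, 0 ≤ α q := by
    intro q hq
    refine le_csInf (hne q) ?_
    intro s hs
    have hmem : (C s : Poly N) ∈ M := by
      have := hM.add_mem hs hq; simpa using this
    exact hnegconst _ hmem
  have hadd : ∀ a b : Poly N, α (a + b) = α a + α b := by
    intro a b
    apply le_antisymm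
    · apply le_of_forall_pos_le_add
      intro ε hε
      have h1 : C (α a + ε/2) - a ∈ M := hmem_of_gt _ _ (by linarith)
      have h2 : C (α b + ε/2) - b ∈ M := hmem_of_gt _ _ (by linarith)
      have h3 := hM.add_mem h1 h2
      have heq : (C (α a + ε/2) - a) + (C (α b + ε/2) - b)
          = C (α a + ε/2 + (α b + ε/2)) - (a + b) := by
        simp only [map_add]; ring
      rw [heq] at h3
      have := hlb _ _ h3
      linarith
    · apply le_of_forall_pos_le_add
      intro ε hε
      have h1 : a - C (α a - ε/4) ∈ M := hmem_of_lt _ _ (by linarith)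
      have h2 : b - C (α b - ε/4) ∈ M := hmem_of_lt _ _ (by linarith)
      have h3 : C (α (a+b) + ε/4) - (a+b) ∈ M := hmem_of_gt _ _ (by linarith)
      have h4 := hM.add_mem (hM.add_mem h1 h2) h3
      have heq : (a - C (α a - ε/4)) + (b - C (α b - ε/4)) + (C (α (a+b) + ε/4) - (a+b))
          = C (α (a+b) + ε/4 - (α a - ε/4) - (α b - ε/4)) := by
        simp only [map_add, map_sub]; ring
      rw [heq] at h4
      have := hnegconst _ h4
      linarith
  have hzero : α 0 = 0 := by
    have := halphaC 0
    rwa [_root_.map_zero] at this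
  have hneg : ∀ a : Poly N, α (-a) = - α a := by
    intro a
    have h := hadd a (-a)
    rw [add_neg_cancel, hzero] at h
    linarith
  have hsmul_le : ∀ t : ℝ, 0 < t → ∀ a : Poly N, α (C t * a) ≤ t * α a := by
    intro t ht a
    apply le_of_forall_pos_le_add
    intro ε hε
    have h1 : C (α a + ε/t) - a ∈ M := hmem_of_gt _ _ (by have := div_pos hε ht; linarith)
    have h2 := hM.smul_mem ht.le h1
    have heq : C t * (C (α a + ε/t) - a) = C (t * (α a + ε/t)) - C t * a := by
      rw [_root_.map_mul]; ring
    rw [heq] at h2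
    have h3 := hlb _ _ h2
    have ht' : t * (α a + ε/t) = t * α a + ε := by field_simp
    linarith
  have hsmul_pos : ∀ t : ℝ, 0 < t → ∀ a : Poly N, α (C t * a) = t * α a := by
    intro t ht a
    refine le_antisymm (hsmul_le t ht a) ?_
    have h := hsmul_le t⁻¹ (by positivity) (C t * a)
    have heq : C t⁻¹ * (C t * a) = a := by
      rw [← mul_assoc, ← _root_.map_mul, inv_mul_cancel₀ (ne_of_gt ht), _root_.map_one, one_mul]
    rw [heq] at h
    have h2 := mul_le_mul_of_nonneg_left h ht.le
    rw [← mul_assoc, mul_inv_cancel₀ (ne_of_gt ht), one_mul] at h2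
    exact h2
  have hsmul : ∀ t : ℝ, ∀ a : Poly N, α (C t * a) = t * α a := by
    intro t a
    rcases lt_trichotomy t 0 with h | h | h
    · have heq : C t * a = C (-t) * (-a) := by rw [map_neg]; ring
      rw [heq, hsmul_pos (-t) (by linarith), hneg]
      ring
    · subst h; simp only [_root_.map_zero, zero_mul, hzero]
    · exact hsmul_pos t h a
  have hsq_ge : ∀ a : Poly N, (α a)^2 ≤ α (a^2) := by
    intro a
    have key := hnonneg _ (hM.sq_mem (a - C (α a)))
    have hexp : (a - C (α a))^2 = a^2 + (C (-2*(α a)) * a + C ((α a)^2)) := by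
      rw [show (C (-2*(α a)) : Poly N) = -2 * C (α a) by rw [_root_.map_mul, map_neg, map_ofNat],
        map_pow]
      ring
    rw [hexp, hadd, hadd, hsmul, halphaC] at key
    nlinarith [key]
  have hsq_le : ∀ a : Poly N, α (a^2) ≤ (α a)^2 := by
    intro a
    apply le_of_forall_pos_le_add
    intro ε hε
    set R := |α a| with hR
    have hR0 : 0 ≤ R := abs_nonneg _
    set η := min 1 (ε/(2*R+2)) with hη
    have hη0 : 0 < η := lt_min one_pos (by positivity)
    have hη1 : η ≤ 1 := min_le_left _ _
    have hη2 : η ≤ ε/(2*R+2) := min_le_right _ _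
    have h1 : C (R+η) - a ∈ M :=
      hmem_of_gt _ _ (lt_of_le_of_lt (le_abs_self _) (by linarith))
    have h2 : C (R+η) + a ∈ M := by
      have hlt : α (-a) < R + η := by
        rw [hneg]
        calc -α a ≤ |α a| := neg_le_abs _
        _ < R + η := by linarith
      have := hmem_of_gt (-a) _ hlt
      rwa [sub_neg_eq_add] at this
    have h3 := hM.sq_bound (show (0:ℝ) < R+η by linarith) h1 h2
    have h4 := hlb _ _ h3
    have h5 : (R+η)^2 ≤ (α a)^2 + ε := by
      have habs : R^2 = (α a)^2 := sq_abs _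
      have hbound : (2*R+2)*η ≤ ε := by
        calc (2*R+2)*η ≤ (2*R+2)*(ε/(2*R+2)) :=
              mul_le_mul_of_nonneg_left hη2 (by linarith)
        _ = ε := by field_simp
      nlinarith [hη0.le, hη1]
    linarith
  have hsq : ∀ a : Poly N, α (a^2) = (α a)^2 := fun a => le_antisymm (hsq_le a) (hsq_ge a)
  have hmul : ∀ a b : Poly N, α (a * b) = α a * α b := by
    intro a b
    have heq : a * b = C (2⁻¹ : ℝ) * ((a+b)^2 + (-(a^2) + -(b^2))) := by
      have h1 : ((a+b)^2 + (-(a^2) + -(b^2)) : Poly N) = C (2:ℝ) * (a*b) := by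
        rw [map_ofNat]; ring
      rw [h1, ← mul_assoc, ← _root_.map_mul]
      norm_num
    calc α (a*b) = α (C (2⁻¹ : ℝ) * ((a+b)^2 + (-(a^2) + -(b^2)))) := by rw [← heq]
    _ = α a * α b := by
        rw [hsmul]
        rw [show α ((a+b)^2 + (-(a^2) + -(b^2)))
            = α ((a+b)^2) + (α (-(a^2)) + α (-(b^2))) by rw [hadd, hadd]]
        rw [hsq, hadd, hneg, hneg, hsq, hsq]
        ring
  refine ⟨fun i => α (X i), ?_⟩
  have heval : ∀ q : Poly N, eval (fun i => α (X i)) q = α q := by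
    intro q
    induction q using MvPolynomial.induction_on with
    | C r => rw [eval_C, halphaC]
    | add p q hp hq => rw [map_add, hadd, hp, hq]
    | mul_X p i hp => rw [_root_.map_mul, hmul, hp, eval_X]
  intro q hq
  rw [heval q]
  exact hnonneg q hq

end Point

section Zorn
variable {M : Set (Poly N)}

/-- any proper quadratic module extends to a total proper one -/
theorem exists_total_ext (hM : IsQM M) (hp : (-1 : Poly N) ∉ M) :
    ∃ M' : Set (Poly N), IsQM M' ∧ M ⊆ M' ∧ (-1 : Poly N) ∉ M' ∧
      ∀ a : Poly N, a ∈ M' ∨ -a ∈ M' := by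
  classical
  set 𝒮 : Set (Set (Poly N)) := {Q | IsQM Q ∧ M ⊆ Q ∧ (-1 : Poly N) ∉ Q} with h𝒮
  have hchain : ∀ c ⊆ 𝒮, IsChain (· ⊆ ·) c → c.Nonempty → ∃ ub ∈ 𝒮, ∀ s ∈ c, s ⊆ ub := by
    intro c hc hchain hne
    obtain ⟨Q₀, hQ₀⟩ := hne
    refine ⟨⋃₀ c, ⟨⟨?_, ?_, ?_⟩, ?_, ?_⟩, fun s hs => Set.subset_sUnion_of_mem hs⟩
    · exact ⟨Q₀, hQ₀, (hc hQ₀).1.one_mem⟩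
    · rintro f g ⟨Q₁, hQ₁, hf⟩ ⟨Q₂, hQ₂, hg⟩
      rcases hchain.total hQ₁ hQ₂ with h | h
      · exact ⟨Q₂, hQ₂, (hc hQ₂).1.add_mem (h hf) hg⟩
      · exact ⟨Q₁, hQ₁, (hc hQ₁).1.add_mem hf (h hg)⟩
    · rintro a f ⟨Q₁, hQ₁, hf⟩
      exact ⟨Q₁, hQ₁, (hc hQ₁).1.sqmul_mem a hf⟩
    · exact fun m hm => ⟨Q₀, hQ₀, (hc hQ₀).2.1 hm⟩
    · rintro ⟨Q₁, hQ₁, hone⟩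
      exact (hc hQ₁).2.2 hone
  obtain ⟨M', hsub, hmax⟩ := zorn_subset_nonempty 𝒮 hchain M ⟨hM, subset_rfl, hp⟩
  obtain ⟨hM', hMM', hp'⟩ := hmax.prop
  refine ⟨M', hM', hMM', hp', ?_⟩
  intro c
  by_contra hcon
  push_neg at hcon
  obtain ⟨hc1, hc2⟩ := hcon
  have hext : ∀ d : Poly N, d ∉ M' →
      ∃ m ∈ M', ∃ s, Sos s ∧ (-1 : Poly N) = m + s * d := by
    intro d hd
    set Q : Set (Poly N) := {q | ∃ m ∈ M', ∃ s, Sos s ∧ q = m + s * d} with hQ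
    have hQqm : IsQM Q := by
      refine ⟨⟨1, hM'.one_mem, 0, Sos.zero, by ring⟩, ?_, ?_⟩
      · rintro f g ⟨m₁, hm₁, s₁, hs₁, rfl⟩ ⟨m₂, hm₂, s₂, hs₂, rfl⟩
        exact ⟨m₁ + m₂, hM'.add_mem hm₁ hm₂, s₁ + s₂, hs₁.add hs₂, by ring⟩
      · rintro a f ⟨m₁, hm₁, s₁, hs₁, rfl⟩
        exact ⟨a ^ 2 * m₁, hM'.sqmul_mem a hm₁, a ^ 2 * s₁, Sos.sqmul a hs₁, by ring⟩
    have hsubQ : M' ⊆ Q := fun m hm => ⟨m, hm, 0, Sos.zero, by ring⟩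
    by_contra hnot
    push_neg at hnot
    have hQS : Q ∈ 𝒮 := by
      refine ⟨hQqm, hMM'.trans hsubQ, ?_⟩
      rintro ⟨m, hm, s, hs, he⟩
      exact hnot m hm s hs he
    have hQeq : Q ⊆ M' := hmax.2 hQS hsubQ
    exact hd (hQeq ⟨0, hM'.zero_mem, 1, Sos.one, by ring⟩)
  obtain ⟨m₁, hm₁, s₁, hs₁, he₁⟩ := hext c hc1
  obtain ⟨m₂, hm₂, s₂, hs₂, he₂⟩ := hext (-c) hc2
  have hkey : -(s₁ + s₂) = s₂ * m₁ + s₁ * m₂ := by linear_combination s₂ * he₁ + s₁ * he₂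
  have hnegsum : -(s₁ + s₂) ∈ M' := by
    rw [hkey]
    exact hM'.add_mem (hM'.sos_mul_mem hs₂ hm₁) (hM'.sos_mul_mem hs₁ hm₂)
  have hnegs₁ : -s₁ ∈ M' := by
    have h := hM'.add_mem hnegsum (hM'.sos_mem hs₂)
    have heq : -(s₁ + s₂) + s₂ = -s₁ := by ring
    rwa [heq] at h
  have hmulc := (hM'.supp_mul (hM'.sos_mem hs₁) hnegs₁ c).1
  have : (-1 : Poly N) ∈ M' := by
    rw [he₁]
    exact hM'.add_mem hm₁ (by rwa [mul_comm] at hmulc)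
  exact hp' this

end Zorn

section LemE
variable {M : Set (Poly N)}

/-- key division lemma: if s·f = 1 + m with s SOS, m ∈ M and M Archimedean, then f ∈ M -/
theorem mem_of_sos_mul (hM : IsQM M) (har : Arch M) {f s m : Poly N}
    (hs : Sos s) (hm : m ∈ M) (heq : s * f = 1 + m) : f ∈ M := by
  classical
  obtain ⟨k₀, hk₀1, hk₀2⟩ := har s
  set k : ℝ := max k₀ 1 with hk
  have hk1 : (1:ℝ) ≤ k := le_max_right _ _
  have hkpos : (0:ℝ) < k := lt_of_lt_of_le one_pos hk1
  have hks : C k - s ∈ M := by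
    have : (C k - s : Poly N) = C (k - k₀) + (C k₀ - s) := by
      simp only [map_sub]; ring
    rw [this]
    exact hM.add_mem (hM.const_mem (by simp [hk, sub_nonneg, le_max_left])) hk₀1
  have hks' : C k + s ∈ M := hM.add_mem (hM.const_mem hkpos.le) (hM.sos_mem hs)
  have hksq : (C (k^2) : Poly N) - s^2 ∈ M := hM.sq_bound hkpos hks hks'
  obtain ⟨ν₁, hν₁, hν₁'⟩ := har f
  set ν : ℝ := max ν₁ 0 with hν
  have hν0 : (0:ℝ) ≤ ν := le_max_right _ _
  have hvf : C ν - f ∈ M := by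
    have hh : (C ν - f : Poly N) = C (ν - ν₁) + (C ν₁ - f) := by
      simp only [map_sub]; ring
    rw [hh]
    exact hM.add_mem (hM.const_mem (by simp [hν, sub_nonneg, le_max_left])) hν₁
  have hvf' : C ν + f ∈ M := by
    have hh : (C ν + f : Poly N) = C (ν - ν₁) + (C ν₁ + f) := by
      simp only [map_sub]; ring
    rw [hh]
    exact hM.add_mem (hM.const_mem (by simp [hν, sub_nonneg, le_max_left])) hν₁'
  set W : ℝ := 2 * ν + 1 with hW
  have hWpos : (0:ℝ) < W := by positivity
  set t : ℝ := (k^2 * W)⁻¹ with ht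
  have htpos : (0:ℝ) < t := by positivity
  have htk : t * (k^2 * W) = 1 := inv_mul_cancel₀ (by positivity)
  -- the one-step improvement
  have step : ∀ lam : ℝ, lam ≤ 0 → -ν ≤ lam → f - C lam ∈ M → f - C (lam + t) ∈ M := by
    intro lam hlam0 hlamν hmem
    set F : Poly N := f - C lam with hF
    have hm' : s * F - 1 ∈ M := by
      have hh : s * F - 1 = m + C (-lam) * s := by
        rw [hF, map_neg]
        linear_combination heq
      rw [hh]
      exact hM.add_mem hm (hM.smul_mem (by linarith) (hM.sos_mem hs))
    have hWF : C W - F ∈ M := by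
      have hh : (C W - F : Poly N) = (C ν - f) + C (W - ν + lam) := by
        simp only [map_sub, map_add]
        rw [hF, hW]
        simp only [map_add, _root_.map_mul, map_ofNat, _root_.map_one]
        ring
      rw [hh]
      exact hM.add_mem hvf (hM.const_mem (by simp only [hW]; linarith))
    have hterm1 : (1 - C t * s)^2 * F ∈ M := hM.sqmul_mem _ hmem
    have hterm2 : C (2*t) * (s * F - 1) ∈ M := hM.smul_mem (by linarith) hm'
    have hterm3 : C (t^2) * (s^2 * (C W - F) + (C (k^2) - s^2) * C W) ∈ M := by
      apply hM.smul_mem (by positivity)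
      apply hM.add_mem (hM.sqmul_mem _ hWF)
      have := hM.smul_mem hWpos.le hksq
      rwa [mul_comm] at this
    have hsum := hM.add_mem (hM.add_mem hterm1 hterm2) hterm3
    have hident : (1 - C t * s)^2 * F + C (2*t) * (s * F - 1)
        + C (t^2) * (s^2 * (C W - F) + (C (k^2) - s^2) * C W)
        = F - C (2*t) + C (t^2 * (k^2 * W)) := by
      simp only [_root_.map_mul, map_pow, map_ofNat]
      ring
    rw [hident] at hsum
    have hfin : F - C (2*t) + C (t^2 * (k^2*W)) = f - C (lam + t) := by
      have ht2 : t^2 * (k^2*W) = t := by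
        rw [pow_two, mul_assoc, htk, mul_one]
      rw [ht2, hF]
      simp only [map_add, _root_.map_mul, map_ofNat]
      ring
    rwa [hfin] at hsum
  -- iterate
  have iter : ∀ j : ℕ, -ν + j * t ≤ 0 → f - C (-ν + j * t) ∈ M := by
    intro j
    induction j with
    | zero =>
        intro _
        have hh : (-ν + ((0:ℕ):ℝ) * t) = -ν := by push_cast; ring
        rw [hh, map_neg, sub_neg_eq_add, add_comm]
        exact hvf'
    | succ i ih =>
        intro hle
        have hti : (0:ℝ) ≤ i * t := by positivity
        have hle' : -ν + i * t ≤ 0 := by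
          have : (i:ℝ) * t ≤ (i+1) * t := by nlinarith
          push_cast at hle
          linarith
        have hmem := ih hle'
        have := step (-ν + i * t) hle' (by linarith) hmem
        have hh : -ν + i * t + t = -ν + ((i:ℕ)+1:ℕ) * t := by push_cast; ring
        rwa [hh] at this
  set j₀ : ℕ := Nat.floor (ν / t) with hj₀
  have hj₀le : (j₀ : ℝ) * t ≤ ν := by
    have h1 : (j₀ : ℝ) ≤ ν / t := Nat.floor_le (by positivity)
    calc (j₀:ℝ) * t ≤ (ν/t) * t := by nlinarith
    _ = ν := by field_simp
  have hj₀lt : ν < ((j₀:ℝ) + 1) * t := by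
    have h1 : ν / t < (j₀:ℝ) + 1 := Nat.lt_floor_add_one _
    calc ν = (ν/t) * t := by field_simp
    _ < ((j₀:ℝ)+1) * t := by nlinarith
  have hmem := iter j₀ (by linarith)
  have hfinal := step (-ν + j₀ * t) (by linarith)
    (by have : (0:ℝ) ≤ (j₀:ℝ) * t := by positivity
        linarith) hmem
  have hpos : 0 < ν - j₀ * t + t + (-ν + j₀ * t + t) - t := by linarith
  -- f = (f - C (-ν + j₀ t + t)) + C (-ν + j₀ t + t) with the constant > 0? not nec!
  have hconst : (0:ℝ) ≤ -ν + j₀ * t + t := by linarith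
  have : f = (f - C (-ν + j₀ * t + t)) + C (-ν + j₀ * t + t) := by ring
  rw [this]
  exact hM.add_mem hfinal (hM.const_mem hconst)

end LemE

section Putinar
variable {M : Set (Poly N)}

theorem putinar (hM : IsQM M) (har : Arch M) {f : Poly N}
    (hpos : ∀ x : Fin N → ℝ, (∀ q ∈ M, 0 ≤ eval x q) → 0 < eval x f) : f ∈ M := by
  classical
  by_cases hc : ∃ m ∈ M, ∃ s, Sos s ∧ (-1 : Poly N) = m + s * (-f)
  · obtain ⟨m, hm, s, hs, he⟩ := hc
    exact mem_of_sos_mul hM har hs hm (by linear_combination he)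
  · push_neg at hc
    set M₁ : Set (Poly N) := {q | ∃ m ∈ M, ∃ s, Sos s ∧ q = m + s * (-f)} with hM₁def
    have hM₁ : IsQM M₁ := by
      refine ⟨⟨1, hM.one_mem, 0, Sos.zero, by ring⟩, ?_, ?_⟩
      · rintro a b ⟨m₁, hm₁, s₁, hs₁, rfl⟩ ⟨m₂, hm₂, s₂, hs₂, rfl⟩
        exact ⟨m₁ + m₂, hM.add_mem hm₁ hm₂, s₁ + s₂, hs₁.add hs₂, by ring⟩
      · rintro a b ⟨m₁, hm₁, s₁, hs₁, rfl⟩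
        exact ⟨a^2 * m₁, hM.sqmul_mem a hm₁, a^2*s₁, Sos.sqmul a hs₁, by ring⟩
    have hMM₁ : M ⊆ M₁ := fun m hm => ⟨m, hm, 0, Sos.zero, by ring⟩
    have hp₁ : (-1 : Poly N) ∉ M₁ := by
      rintro ⟨m, hm, s, hs, he⟩
      exact hc m hm s hs he
    obtain ⟨M', hM', hsub, hp', htot⟩ := exists_total_ext hM₁ hp₁
    have har' : Arch M' := by
      intro a
      obtain ⟨r, h1, h2⟩ := har a
      exact ⟨r, hsub (hMM₁ h1), hsub (hMM₁ h2)⟩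
    obtain ⟨x, hx⟩ := exists_point hM' har' hp' htot
    have hxK : ∀ q ∈ M, 0 ≤ eval x q := fun q hq => hx q (hsub (hMM₁ hq))
    have h1 := hpos x hxK
    have h2 : 0 ≤ eval x (-f) := hx _ (hsub ⟨0, hM.zero_mem, 1, Sos.one, by ring⟩)
    rw [map_neg] at h2
    linarith

end Putinar

section QMfacts
variable {N : ℕ}

theorem isQM_QM (G : Set (Poly N)) : IsQM (QM G) := by
  refine ⟨?_, ?_, ?_⟩
  · intro M hM; exact hM.1.1
  · intro f g hf hg M hM; exact hM.1.2.1 f g (hf M hM) (hg M hM)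
  · intro a f hf M hM; exact hM.1.2.2 a f (hf M hM)

theorem subset_QM (G : Set (Poly N)) : G ⊆ QM G := by
  intro g hg M hM; exact hM.2 hg

theorem QM_subset {G T : Set (Poly N)} (hT : IsQM T) (hsub : G ⊆ T) : QM G ⊆ T := by
  intro q hq; exact hq T ⟨hT, hsub⟩

theorem qm_eval_nonneg {G : Set (Poly N)} {q : Poly N} (hq : q ∈ QM G) {x : Fin N → ℝ}
    (hx : x ∈ KSet G) : 0 ≤ eval x q := by
  have hT : IsQM {q : Poly N | 0 ≤ eval x q} := by
    refine ⟨by simp, ?_, ?_⟩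
    · intro f g hf hg
      simp only [Set.mem_setOf_eq, map_add] at *
      linarith
    · intro a f hf
      simp only [Set.mem_setOf_eq, _root_.map_mul, map_pow] at *
      exact mul_nonneg (sq_nonneg _) hf
  exact QM_subset hT (fun g hg => hx g hg) hq

/-- Archimedean follows from the ball constraint -/
theorem arch_of_ball {M : Set (Poly N)} (hM : IsQM M)
    (hball : (1 : Poly N) - ∑ j : Fin N, X j ^ 2 ∈ M) : Arch M := by
  classical
  set H : Set (Poly N) := {b | ∃ r : ℝ, C r - b ∈ M ∧ C r + b ∈ M} with hH
  have hCm : ∀ c : ℝ, (C c : Poly N) ∈ H := by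
    intro c
    refine ⟨|c|, ?_, ?_⟩
    · rw [← map_sub]; exact hM.const_mem (by simp [sub_nonneg, le_abs_self])
    · rw [← map_add]; exact hM.const_mem (by linarith [neg_abs_le c])
  have hAdd : ∀ a b : Poly N, a ∈ H → b ∈ H → a + b ∈ H := by
    rintro a b ⟨r₁, h1, h2⟩ ⟨r₂, h3, h4⟩
    refine ⟨r₁ + r₂, ?_, ?_⟩
    · have := hM.add_mem h1 h3
      have heq : (C r₁ - a) + (C r₂ - b) = C (r₁ + r₂) - (a + b) := by
        rw [map_add]; ring
      rwa [heq] at this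
    · have := hM.add_mem h2 h4
      have heq : (C r₁ + a) + (C r₂ + b) = C (r₁ + r₂) + (a + b) := by
        rw [map_add]; ring
      rwa [heq] at this
  have hNeg : ∀ a : Poly N, a ∈ H → -a ∈ H := by
    rintro a ⟨r, h1, h2⟩
    exact ⟨r, by rwa [sub_neg_eq_add], by rwa [← sub_eq_add_neg]⟩
  have hPos : ∀ a : Poly N, a ∈ H → ∃ r : ℝ, 0 < r ∧ C r - a ∈ M ∧ C r + a ∈ M := by
    rintro a ⟨r, h1, h2⟩
    refine ⟨|r| + 1, by positivity, ?_, ?_⟩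
    · have := hM.add_mem (hM.const_mem (show (0:ℝ) ≤ |r| + 1 - r by
        linarith [le_abs_self r])) h1
      have heq : C (|r| + 1 - r) + (C r - a) = C (|r| + 1) - a := by
        simp only [map_sub, map_add, _root_.map_one]; ring
      rwa [heq] at this
    · have := hM.add_mem (hM.const_mem (show (0:ℝ) ≤ |r| + 1 - r by
        linarith [le_abs_self r])) h2
      have heq : C (|r| + 1 - r) + (C r + a) = C (|r| + 1) + a := by
        simp only [map_sub, map_add, _root_.map_one]; ring
      rwa [heq] at this
  have hSq : ∀ a : Poly N, a ∈ H → a ^ 2 ∈ H := by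
    intro a ha
    obtain ⟨r, hr, h1, h2⟩ := hPos a ha
    refine ⟨r ^ 2, hM.sq_bound hr h1 h2, ?_⟩
    rw [show (C (r^2) + a^2 : Poly N) = C (r^2) + a^2 by rfl]
    exact hM.add_mem (hM.const_mem (by positivity)) (hM.sq_mem a)
  have hSmul : ∀ (t : ℝ) (a : Poly N), a ∈ H → C t * a ∈ H := by
    rintro t a ⟨r, h1, h2⟩
    rcases le_or_gt 0 t with ht | ht
    · refine ⟨t * r, ?_, ?_⟩
      · have := hM.smul_mem ht h1
        have heq : C t * (C r - a) = C (t * r) - C t * a := by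
          rw [_root_.map_mul]; ring
        rwa [heq] at this
      · have := hM.smul_mem ht h2
        have heq : C t * (C r + a) = C (t * r) + C t * a := by
          rw [_root_.map_mul]; ring
        rwa [heq] at this
    · refine ⟨(-t) * r, ?_, ?_⟩
      · have := hM.smul_mem (show (0:ℝ) ≤ -t by linarith) h2
        have heq : C (-t) * (C r + a) = C ((-t) * r) - C t * a := by
          simp only [_root_.map_mul, map_neg]; ring
        rwa [heq] at this
      · have := hM.smul_mem (show (0:ℝ) ≤ -t by linarith) h1
        have heq : C (-t) * (C r - a) = C ((-t) * r) + C t * a := by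
          simp only [_root_.map_mul, map_neg]; ring
        rwa [heq] at this
  have hMul : ∀ a b : Poly N, a ∈ H → b ∈ H → a * b ∈ H := by
    intro a b ha hb
    have h1 : (a + b)^2 ∈ H := hSq _ (hAdd _ _ ha hb)
    have hsub : a - b ∈ H := by
      rw [sub_eq_add_neg]; exact hAdd _ _ ha (hNeg _ hb)
    have h2 : -((a - b)^2) ∈ H := hNeg _ (hSq _ hsub)
    have h3 : C (4⁻¹ : ℝ) * ((a+b)^2 + -((a-b)^2)) ∈ H :=
      hSmul _ _ (hAdd _ _ h1 h2)
    have heq : C (4⁻¹ : ℝ) * ((a+b)^2 + -((a-b)^2)) = a * b := by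
      have h4 : ((a+b)^2 + -((a-b)^2) : Poly N) = C (4:ℝ) * (a * b) := by
        rw [map_ofNat]; ring
      rw [h4, ← mul_assoc, ← _root_.map_mul]
      norm_num
    rwa [heq] at h3
  have hXmem : ∀ j : Fin N, X j ∈ H := by
    intro j
    have e := Finset.sum_erase_add Finset.univ (fun l : Fin N => (X l : Poly N) ^ 2)
      (Finset.mem_univ j)
    have h1mX2 : (1 : Poly N) - X j ^ 2 ∈ M := by
      have hsos : Sos (∑ l ∈ Finset.univ.erase j, (X l : Poly N) ^ 2) :=
        Finset.sum_induction _ _ (fun _ _ => Sos.add) Sos.zero (fun l _ => Sos.sq (X l))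
      have hmem := hM.add_mem hball (hM.sos_mem hsos)
      have heq : ((1 : Poly N) - ∑ l : Fin N, X l ^ 2) +
          ∑ l ∈ Finset.univ.erase j, (X l : Poly N) ^ 2 = 1 - X j ^ 2 := by
        linear_combination e
      rwa [heq] at hmem
    have hplus : (1 : Poly N) + X j ∈ M := by
      have hmem := hM.smul_mem (show (0:ℝ) ≤ 2⁻¹ by norm_num)
        (hM.add_mem (hM.sq_mem (1 + X j)) h1mX2)
      have h4 : ((1 + X j)^2 + (1 - X j ^ 2) : Poly N) = C (2:ℝ) * (1 + X j) := by
        rw [map_ofNat]; ring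
      rw [h4, ← mul_assoc, ← _root_.map_mul] at hmem
      norm_num at hmem
      exact hmem
    have hminus : (1 : Poly N) - X j ∈ M := by
      have hmem := hM.smul_mem (show (0:ℝ) ≤ 2⁻¹ by norm_num)
        (hM.add_mem (hM.sq_mem (1 - X j)) h1mX2)
      have h4 : ((1 - X j)^2 + (1 - X j ^ 2) : Poly N) = C (2:ℝ) * (1 - X j) := by
        rw [map_ofNat]; ring
      rw [h4, ← mul_assoc, ← _root_.map_mul] at hmem
      norm_num at hmem
      exact hmem
    exact ⟨1, by rw [_root_.map_one]; exact hminus, by rw [_root_.map_one]; exact hplus⟩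
  have hAll : ∀ b : Poly N, b ∈ H := by
    intro b
    induction b using MvPolynomial.induction_on with
    | C c => exact hCm c
    | add p q hp hq => exact hAdd _ _ hp hq
    | mul_X p j hp => exact hMul _ _ hp (hXmem j)
  intro a
  obtain ⟨r, h1, h2⟩ := hAll a
  exact ⟨r, h1, h2⟩

end QMfacts

section Transfer
variable {n : ℕ}

noncomputable def pp (n : ℕ) : Poly n := 1 + ∑ i : Fin n, X i ^ 2

def degw {n : ℕ} (s : Fin n →₀ ℕ) : ℕ := ∑ i : Fin n, s i

noncomputable def liftP (g : Poly n) (D : ℕ) : Poly (n+1) :=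
  ∑ s ∈ g.support, (C (coeff s g) : Poly (n+1)) * X (0 : Fin (n+1)) ^ (D - degw s) *
    ∏ i : Fin n, X (i.succ : Fin (n+1)) ^ s i

noncomputable def hrel (n : ℕ) : Poly (n+1) :=
  X (0 : Fin (n+1)) - X (0 : Fin (n+1)) ^ 2 - ∑ i : Fin n, X (i.succ : Fin (n+1)) ^ 2

noncomputable abbrev FR (n : ℕ) := FractionRing (Poly n)

noncomputable def vv (n : ℕ) : Fin (n+1) → FR n :=
  fun j => Fin.cases ((algebraMap (Poly n) (FR n) (pp n))⁻¹) (fun i => algebraMap (Poly n) (FR n) (X i) * (algebraMap (Poly n) (FR n) (pp n))⁻¹) j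

noncomputable def θh (n : ℕ) : Poly (n+1) →+* FR n :=
  eval₂Hom ((algebraMap (Poly n) (FR n)).comp (C : ℝ →+* Poly n)) (vv n)

theorem vv_zero : vv n 0 = (algebraMap (Poly n) (FR n) (pp n))⁻¹ := rfl

theorem vv_succ (i : Fin n) : vv n i.succ = algebraMap (Poly n) (FR n) (X i) * (algebraMap (Poly n) (FR n) (pp n))⁻¹ := by
  simp [vv]

theorem Sos.pp (n : ℕ) : Sos (pp n) := by
  refine Sos.add Sos.one ?_
  exact Finset.sum_induction _ _ (fun _ _ => Sos.add) Sos.zero (fun i _ => Sos.sq (X i))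

theorem pp_pow_mul_mem {G : Set (Poly n)} (j : ℕ) {a : Poly n} (ha : a ∈ QM G) :
    pp n ^ j * a ∈ QM G := by
  induction j with
  | zero => simpa using ha
  | succ i ih =>
      have := (isQM_QM G).sos_mul_mem (Sos.pp n) ih
      have heq : pp n * (pp n ^ i * a) = pp n ^ (i + 1) * a := by ring
      rwa [heq] at this

theorem amap_pp_ne (n : ℕ) : algebraMap (Poly n) (FR n) (pp n) ≠ 0 := by
  intro h
  have h0 : pp n = 0 := IsFractionRing.injective (Poly n) (FR n)
    (by rw [_root_.map_zero, h])
  have := congrArg (eval (fun _ : Fin n => (0:ℝ))) h0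
  simp [pp] at this

theorem theta_range (b : Poly (n+1)) :
    ∃ (l : ℕ) (Q : Poly n), algebraMap (Poly n) (FR n) Q = algebraMap (Poly n) (FR n) (pp n) ^ l * θh n b := by
  have hq : algebraMap (Poly n) (FR n) (pp n) ≠ 0 := amap_pp_ne n
  induction b using MvPolynomial.induction_on with
  | C c =>
      refine ⟨0, C c, ?_⟩
      simp only [θh, eval₂Hom_C, pow_zero, one_mul]
      rfl
  | add b₁ b₂ h₁ h₂ =>
      obtain ⟨l₁, Q₁, e₁⟩ := h₁
      obtain ⟨l₂, Q₂, e₂⟩ := h₂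
      refine ⟨l₁ + l₂, Q₁ * pp n ^ l₂ + Q₂ * pp n ^ l₁, ?_⟩
      rw [map_add, _root_.map_mul, _root_.map_mul, map_pow, map_pow, e₁, e₂, map_add, pow_add]
      ring
  | mul_X b j h =>
      obtain ⟨l, Q, e⟩ := h
      refine ⟨l + 1, Q * (Fin.cases 1 (fun i : Fin n => X i) j : Poly n), ?_⟩
      have hpre : algebraMap (Poly n) (FR n) (Fin.cases 1 (fun i : Fin n => X i) j : Poly n)
          = algebraMap (Poly n) (FR n) (pp n) * vv n j := by
        refine Fin.cases ?_ ?_ j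
        · rw [vv_zero]
          simp only [Fin.cases_zero, _root_.map_one]
          rw [mul_inv_cancel₀ hq]
        · intro i
          rw [vv_succ]
          simp only [Fin.cases_succ]
          rw [mul_comm (algebraMap (Poly n) (FR n) (X i)), ← mul_assoc, mul_inv_cancel₀ hq, one_mul]
      rw [_root_.map_mul, e, _root_.map_mul, hpre]
      simp only [θh, eval₂Hom_X']
      ring

theorem theta_liftP (g : Poly n) (D : ℕ) (hdeg : ∀ s ∈ g.support, degw s ≤ D) :
    θh n (liftP g D) * algebraMap (Poly n) (FR n) (pp n) ^ D = algebraMap (Poly n) (FR n) g := by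
  have hq : algebraMap (Poly n) (FR n) (pp n) ≠ 0 := amap_pp_ne n
  set q := algebraMap (Poly n) (FR n) (pp n) with hqdef
  rw [liftP, map_sum, Finset.sum_mul]
  conv_rhs => rw [g.as_sum, map_sum]
  apply Finset.sum_congr rfl
  intro s hs
  rw [_root_.map_mul, _root_.map_mul, map_pow, map_prod]
  simp only [θh, eval₂Hom_C, eval₂Hom_X', map_pow]
  rw [show vv n 0 = q⁻¹ from rfl]
  have hprod2 : ∏ i : Fin n, vv n i.succ ^ s i
      = (∏ i : Fin n, algebraMap (Poly n) (FR n) (X i) ^ s i) * q⁻¹ ^ degw s := by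
    calc ∏ i : Fin n, vv n i.succ ^ s i
        = ∏ i : Fin n, (algebraMap (Poly n) (FR n) (X i) ^ s i * q⁻¹ ^ s i) := by
          apply Finset.prod_congr rfl
          intro i _
          rw [vv_succ, mul_pow]
    _ = (∏ i : Fin n, algebraMap (Poly n) (FR n) (X i) ^ s i) * ∏ i : Fin n, q⁻¹ ^ s i :=
          Finset.prod_mul_distrib
    _ = (∏ i : Fin n, algebraMap (Poly n) (FR n) (X i) ^ s i) * q⁻¹ ^ degw s := by
          rw [show (degw s : ℕ) = ∑ i : Fin n, s i from rfl, Finset.prod_pow_eq_pow_sum]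
  rw [hprod2]
  have hmono : algebraMap (Poly n) (FR n) (monomial s (coeff s g))
      = algebraMap (Poly n) (FR n) (C (coeff s g)) * ∏ i : Fin n, algebraMap (Poly n) (FR n) (X i) ^ s i := by
    rw [monomial_eq, _root_.map_mul]
    congr 1
    rw [Finsupp.prod_pow, map_prod]
    apply Finset.prod_congr rfl
    intro i _
    rw [map_pow]
  rw [hmono]
  have hinv : q⁻¹ ^ (D - degw s) * (q⁻¹ ^ degw s * q ^ D) = 1 := by
    rw [← mul_assoc, ← pow_add, Nat.sub_add_cancel (hdeg s hs), inv_pow,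
      inv_mul_cancel₀ (pow_ne_zero _ hq)]
  calc algebraMap (Poly n) (FR n) (C (coeff s g)) * q⁻¹ ^ (D - degw s)
        * ((∏ i : Fin n, algebraMap (Poly n) (FR n) (X i) ^ s i) * q⁻¹ ^ degw s) * q ^ D
      = algebraMap (Poly n) (FR n) (C (coeff s g)) * (∏ i : Fin n, algebraMap (Poly n) (FR n) (X i) ^ s i)
        * (q⁻¹ ^ (D - degw s) * (q⁻¹ ^ degw s * q ^ D)) := by ring
  _ = algebraMap (Poly n) (FR n) (C (coeff s g)) * ∏ i : Fin n, algebraMap (Poly n) (FR n) (X i) ^ s i := by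
      rw [hinv, mul_one]

theorem theta_hrel (n : ℕ) : θh n (hrel n) = 0 := by
  have hq : algebraMap (Poly n) (FR n) (pp n) ≠ 0 := amap_pp_ne n
  set q := algebraMap (Poly n) (FR n) (pp n) with hqdef
  set S : FR n := ∑ i : Fin n, algebraMap (Poly n) (FR n) (X i) ^ 2 with hS
  have hexp : θh n (hrel n) = q⁻¹ - q⁻¹^2 - S * q⁻¹^2 := by
    rw [hrel, map_sub, map_sub, map_pow, map_sum]
    simp only [θh, eval₂Hom_X']
    rw [show vv n 0 = q⁻¹ from rfl]
    congr 1
    rw [hS, Finset.sum_mul]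
    apply Finset.sum_congr rfl
    intro i _
    rw [map_pow, eval₂Hom_X', vv_succ, mul_pow]
  have e1 : q⁻¹ * q^2 = q := by
    rw [pow_two, ← mul_assoc, inv_mul_cancel₀ hq, one_mul]
  have e2 : q⁻¹^2 * q^2 = 1 := by
    rw [← mul_pow, inv_mul_cancel₀ hq, one_pow]
  have hqS : q = 1 + S := by
    rw [hqdef, pp, map_add, _root_.map_one, map_sum, hS]
    congr 1
    apply Finset.sum_congr rfl
    intro i _
    rw [map_pow]
  have key : θh n (hrel n) * q ^ 2 = 0 := by
    rw [hexp, sub_mul, sub_mul, mul_assoc S, e1, e2, mul_one, hqS]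
    ring
  rcases mul_eq_zero.mp key with h | h
  · exact h
  · exact absurd h (pow_ne_zero _ hq)

theorem degw_le_totalDegree {g : Poly n} {s : Fin n →₀ ℕ} (hs : s ∈ g.support) :
    degw s ≤ g.totalDegree := by
  have h := MvPolynomial.le_totalDegree hs
  have h2 : (s.sum fun _ e => e) = degw s := Finsupp.sum_fintype _ _ (fun _ => rfl)
  rwa [h2] at h

theorem eval_liftP (g : Poly n) (D : ℕ) (hdeg : ∀ s ∈ g.support, degw s ≤ D)
    (u : Fin (n+1) → ℝ) (hu : u 0 ≠ 0) :
    eval u (liftP g D) = u 0 ^ D * eval (fun i => u i.succ / u 0) g := by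
  rw [liftP, map_sum]
  conv_rhs => rw [g.as_sum, map_sum, Finset.mul_sum]
  apply Finset.sum_congr rfl
  intro s hs
  rw [_root_.map_mul, _root_.map_mul, map_pow, eval_C, eval_X, map_prod]
  simp only [map_pow, eval_X]
  rw [eval_monomial]
  rw [Finsupp.prod_pow]
  have h1 : (∏ i : Fin n, u i.succ ^ s i) / u 0 ^ degw s
      = ∏ i : Fin n, (u i.succ / u 0) ^ s i := by
    rw [show (degw s : ℕ) = ∑ i : Fin n, s i from rfl, ← Finset.prod_pow_eq_pow_sum,
      ← Finset.prod_div_distrib]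
    exact Finset.prod_congr rfl (fun i _ => (div_pow _ _ _).symm)
  rw [← h1]
  have h2 : u 0 ^ D = u 0 ^ (D - degw s) * u 0 ^ degw s := by
    rw [← pow_add, Nat.sub_add_cancel (hdeg s hs)]
  rw [h2]
  have h3 : u 0 ^ degw s ≠ 0 := pow_ne_zero _ hu
  field_simp

theorem eval_liftP_zero (g : Poly n) (D : ℕ) (hD : 1 ≤ D)
    (u : Fin (n+1) → ℝ) (hu : u 0 = 0) (hus : ∀ i : Fin n, u i.succ = 0) :
    eval u (liftP g D) = 0 := by
  rw [liftP, map_sum]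
  apply Finset.sum_eq_zero
  intro s _
  rw [_root_.map_mul, _root_.map_mul, map_pow, eval_X, hu]
  by_cases hcase : ∀ i : Fin n, s i = 0
  · have hw : degw s = 0 := Finset.sum_eq_zero (fun i _ => hcase i)
    rw [hw, zero_pow (by omega)]
    ring
  · push_neg at hcase
    obtain ⟨i, hi⟩ := hcase
    have hz : eval u (∏ i : Fin n, (X (i.succ : Fin (n+1)) : Poly (n+1)) ^ s i) = 0 := by
      rw [map_prod]
      apply Finset.prod_eq_zero (Finset.mem_univ i)
      rw [map_pow, eval_X, hus i, zero_pow hi]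
    rw [hz]
    ring

theorem eval_hrel (u : Fin (n+1) → ℝ) :
    eval u (hrel n) = u 0 - u 0 ^ 2 - ∑ i : Fin n, u i.succ ^ 2 := by
  simp [hrel]

set_option maxHeartbeats 1000000 in
/-- forward direction core -/
theorem marshall_forward (G : Set (Poly n)) (f : Poly n)
    (hf : ∀ x ∈ KSet G, 0 ≤ eval x f) (ε : ℝ) (hε : 0 < ε) :
    ∃ l : ℕ, pp n ^ l * (f + C ε * pp n ^ (f.totalDegree + 1)) ∈ QM G := by
  classical
  set k := f.totalDegree + 1 with hk
  set gens : Set (Poly (n+1)) :=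
    ((fun g => liftP g g.totalDegree) '' G) ∪ {hrel n, -hrel n} with hgens
  have hMYqm : IsQM (QM gens) := isQM_QM gens
  have hgsub : gens ⊆ QM gens := subset_QM gens
  have hrelmem : hrel n ∈ QM gens := hgsub (Or.inr (by simp))
  have hrelneg : -hrel n ∈ QM gens := hgsub (Or.inr (by simp))
  have h1Y0 : (1 : Poly (n+1)) - X 0 ∈ QM gens := by
    have hsos : Sos (∑ i : Fin n, (X (i.succ : Fin (n+1)) : Poly (n+1)) ^ 2) :=
      Finset.sum_induction _ _ (fun _ _ => Sos.add) Sos.zero (fun i _ => Sos.sq _)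
    have hmem := hMYqm.add_mem (hMYqm.add_mem (hMYqm.sq_mem (1 - X 0)) hrelmem)
      (hMYqm.sos_mem hsos)
    have heq : ((1 : Poly (n+1)) - X 0)^2 + hrel n
        + ∑ i : Fin n, (X (i.succ : Fin (n+1)) : Poly (n+1))^2 = 1 - X 0 := by
      rw [hrel]; ring
    rwa [heq] at hmem
  have hball : (1 : Poly (n+1)) - ∑ j : Fin (n+1), X j ^ 2 ∈ QM gens := by
    have hmem := hMYqm.add_mem h1Y0 hrelmem
    have heq : ((1:Poly (n+1)) - X 0) + hrel n = 1 - ∑ j : Fin (n+1), X j ^ 2 := by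
      rw [hrel, Fin.sum_univ_succ]; ring
    rwa [heq] at hmem
  have har : Arch (QM gens) := arch_of_ball hMYqm hball
  have hdegf : ∀ s ∈ f.support, degw s ≤ k :=
    fun s hs => (degw_le_totalDegree hs).trans (Nat.le_succ _)
  -- Putinar
  have hFmem : liftP f k + C ε ∈ QM gens := by
    apply putinar hMYqm har
    intro u hu
    have hr1 : 0 ≤ eval u (hrel n) := hu _ hrelmem
    have hr2 : 0 ≤ eval u (-hrel n) := hu _ hrelneg
    rw [map_neg] at hr2
    have hrel0 : eval u (hrel n) = 0 := le_antisymm (by linarith) hr1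
    rw [eval_hrel] at hrel0
    have hS : 0 ≤ ∑ i : Fin n, u i.succ ^ 2 :=
      Finset.sum_nonneg (fun i _ => sq_nonneg _)
    have hu0 : 0 ≤ u 0 := by nlinarith [sq_nonneg (u 0)]
    rw [map_add, eval_C]
    rcases eq_or_lt_of_le hu0 with h0 | h0
    · have hSz : ∑ i : Fin n, u i.succ ^ 2 = 0 := by nlinarith
      have hus : ∀ i : Fin n, u i.succ = 0 := by
        intro i
        have hzero := (Finset.sum_eq_zero_iff_of_nonneg
          (fun i _ => sq_nonneg (u i.succ))).mp hSz i (Finset.mem_univ i)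
        exact pow_eq_zero_iff (two_ne_zero) |>.mp hzero
      rw [eval_liftP_zero f k (by omega) u h0.symm hus]
      linarith
    · have hxK : (fun i => u i.succ / u 0) ∈ KSet G := by
        intro g hg
        have hlift : liftP g g.totalDegree ∈ QM gens := hgsub (Or.inl ⟨g, hg, rfl⟩)
        have hval := hu _ hlift
        rw [eval_liftP g _ (fun s hs => degw_le_totalDegree hs) u (ne_of_gt h0)] at hval
        by_contra hneg
        push_neg at hneg
        nlinarith [pow_pos h0 g.totalDegree]
      have hfx := hf _ hxK
      rw [eval_liftP f k hdegf u (ne_of_gt h0)]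
      have hα : 0 ≤ u 0 ^ k * eval (fun i => u i.succ / u 0) f :=
        mul_nonneg (by positivity) hfx
      linarith
  -- transfer through the fraction field
  have hq : algebraMap (Poly n) (FR n) (pp n) ≠ 0 := amap_pp_ne n
  set T : Set (Poly (n+1)) :=
    {b | ∃ l : ℕ, ∃ a ∈ QM G, algebraMap (Poly n) (FR n) a = algebraMap (Poly n) (FR n) (pp n) ^ l * θh n b} with hT
  have hTqm : IsQM T := by
    refine ⟨⟨0, 1, (isQM_QM G).one_mem, by rw [_root_.map_one, _root_.map_one, pow_zero, mul_one]⟩,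
      ?_, ?_⟩
    · rintro b₁ b₂ ⟨l₁, a₁, ha₁, e₁⟩ ⟨l₂, a₂, ha₂, e₂⟩
      refine ⟨l₁ + l₂, pp n ^ l₂ * a₁ + pp n ^ l₁ * a₂,
        (isQM_QM G).add_mem (pp_pow_mul_mem _ ha₁) (pp_pow_mul_mem _ ha₂), ?_⟩
      rw [map_add, _root_.map_mul, _root_.map_mul, map_pow, map_pow, e₁, e₂,
        map_add, pow_add]
      ring
    · rintro b c ⟨l, a, ha, e⟩
      obtain ⟨l', Q, hQ⟩ := theta_range (n := n) b
      refine ⟨2*l' + l, Q^2 * a, (isQM_QM G).sqmul_mem Q ha, ?_⟩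
      rw [_root_.map_mul, map_pow, hQ, e, _root_.map_mul, map_pow]
      ring
  have hgensT : gens ⊆ T := by
    rintro b hb
    rcases hb with ⟨g, hg, rfl⟩ | hb
    · refine ⟨g.totalDegree, g, subset_QM G hg, ?_⟩
      rw [← theta_liftP g _ (fun s hs => degw_le_totalDegree hs)]
      ring
    · simp only [Set.mem_insert_iff, Set.mem_singleton_iff] at hb
      rcases hb with rfl | rfl
      · exact ⟨0, 0, (isQM_QM G).zero_mem,
          by rw [_root_.map_zero, theta_hrel]; ring⟩
      · exact ⟨0, 0, (isQM_QM G).zero_mem,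
          by rw [_root_.map_zero, map_neg, theta_hrel]; ring⟩
  have hFT : liftP f k + C ε ∈ T := QM_subset hTqm hgensT hFmem
  obtain ⟨l, a, ha, heqa⟩ := hFT
  refine ⟨l, ?_⟩
  have hCε : θh n (C ε : Poly (n+1)) = algebraMap (Poly n) (FR n) (C ε) := by
    simp only [θh, eval₂Hom_C]
    rfl
  rw [map_add, hCε] at heqa
  have hlift := theta_liftP f k hdegf
  have hkey : pp n ^ k * a = pp n ^ l * (f + C ε * pp n ^ k) := by
    apply IsFractionRing.injective (Poly n) (FR n)
    rw [_root_.map_mul, map_pow, heqa, _root_.map_mul, map_pow, map_add,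
      _root_.map_mul, map_pow]
    linear_combination (algebraMap (Poly n) (FR n) (pp n)) ^ l * hlift
  rw [← hkey]
  exact pp_pow_mul_mem k ha

end Transfer
end MarshallAux

/-- Marshall's theorem (scalar case). -/
theorem marshall_scalar {n : ℕ} (G : Set (MvPolynomial (Fin n) ℝ)) (hG : G.Finite)
    (f : MvPolynomial (Fin n) ℝ) :
    (∀ x ∈ KSet G, 0 ≤ MvPolynomial.eval x f) ↔
      ∃ k : ℕ, ∀ ε : ℚ, 0 < ε → ∃ l : ℕ,
        (1 + ∑ i : Fin n, MvPolynomial.X i ^ 2 : MvPolynomial (Fin n) ℝ) ^ l *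
          (f + MvPolynomial.C (ε : ℝ) *
            (1 + ∑ i : Fin n, MvPolynomial.X i ^ 2 : MvPolynomial (Fin n) ℝ) ^ k) ∈ QM G := by
  constructor
  · intro hf
    refine ⟨f.totalDegree + 1, ?_⟩
    intro ε hε
    have hεR : (0:ℝ) < (ε:ℝ) := by exact_mod_cast hε
    obtain ⟨l, hl⟩ := MarshallAux.marshall_forward G f hf (ε:ℝ) hεR
    exact ⟨l, hl⟩
  · rintro ⟨k, hk⟩ x hx
    by_contra hneg
    push_neg at hneg
    set P : ℝ := MvPolynomial.eval x (1 + ∑ i : Fin n, MvPolynomial.X i ^ 2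
      : MvPolynomial (Fin n) ℝ) with hP
    have hP1 : (1:ℝ) ≤ P := by
      rw [hP]
      have : MvPolynomial.eval x (1 + ∑ i : Fin n, MvPolynomial.X i ^ 2
          : MvPolynomial (Fin n) ℝ) = 1 + ∑ i : Fin n, x i ^ 2 := by
        simp
      rw [this]
      have h0 : (0:ℝ) ≤ ∑ i : Fin n, x i ^ 2 :=
        Finset.sum_nonneg (fun i _ => sq_nonneg _)
      linarith
    have hPpos : (0:ℝ) < P := by linarith
    have hPk : (0:ℝ) < P ^ k := by positivity
    obtain ⟨δ, hδ0, hδlt⟩ := exists_rat_btwn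
      (show (0:ℝ) < -MvPolynomial.eval x f / P ^ k by
        apply div_pos (by linarith) hPk)
    have hδpos : (0:ℚ) < δ := by exact_mod_cast hδ0
    obtain ⟨l, hl⟩ := hk δ hδpos
    have h0 := MarshallAux.qm_eval_nonneg hl hx
    have hsplit : P = 1 + MvPolynomial.eval x (∑ i : Fin n, MvPolynomial.X i ^ 2
        : MvPolynomial (Fin n) ℝ) := by
      rw [hP, map_add, _root_.map_one]
    simp only [_root_.map_mul, map_pow, map_add, eval_C, _root_.map_one] at h0
    simp only [← hsplit] at h0
    have h1 : (δ:ℝ) * P ^ k < -MvPolynomial.eval x f := by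
      have h2 := mul_lt_mul_of_pos_right hδlt hPk
      rwa [div_mul_cancel₀ _ (ne_of_gt hPk)] at h2
    have hlt : MvPolynomial.eval x f + (δ:ℝ) * P ^ k < 0 := by linarith
    have hPl : (0:ℝ) < P ^ l := by positivity
    nlinarith
end
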